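/- arXiv:1610.08816 — 5 statements merged into one kernel-verified Lean document; each statement's English description precedes it below -/
import Mathlib

section
/- For the connected threshold graph Γ on n = 2m vertices with binary string (01)^m, the determinant of the normalized adjacency matrix equals (−1)^{n/2} · 2/n!. -/
open Matrix Polynomial BigOperators Finset

def thresholdGraph (n : ℕ) (b : Fin n → Bool) : SimpleGraph (Fin n) where
  Adj i j := i ≠ j ∧ b (max i j) = true
  symm := ⟨fun i j h => ⟨h.1.symm, by rw [max_comm]; exact h.2⟩⟩
  loopless := ⟨fun i h => h.1 rfl⟩

instance (n : ℕ) (b : Fin n → Bool) : DecidableRel (thresholdGraph n b).Adj :=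
  fun i j => inferInstanceAs (Decidable (i ≠ j ∧ b (max i j) = true))

noncomputable def NA {n : ℕ} (G : SimpleGraph (Fin n)) [DecidableRel G.Adj] :
    Matrix (Fin n) (Fin n) ℝ :=
  (Matrix.diagonal fun i => ((G.degree i : ℝ))⁻¹) * G.adjMatrix ℝ

def cum (s t : ℕ → ℕ) (i : ℕ) : ℕ := ∑ j ∈ Finset.range i, (s j + t j)

def isOne (k : ℕ) (s t : ℕ → ℕ) (p : ℕ) : Bool :=
  decide (∃ i < k, cum s t i + s i ≤ p ∧ p < cum s t i + s i + t i)

def TG (k : ℕ) (s t : ℕ → ℕ) : SimpleGraph (Fin (cum s t k)) :=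
  thresholdGraph _ (fun p => isOne k s t p.val)

instance (k : ℕ) (s t : ℕ → ℕ) : DecidableRel (TG k s t).Adj :=
  inferInstanceAs (DecidableRel (thresholdGraph _ _).Adj)

section Aux

lemma fin_val_max {n : ℕ} (a b : Fin n) : (max a b).val = max a.val b.val := by
  rcases le_total a b with h | h
  · rw [max_eq_right h, Nat.max_eq_right (Fin.le_def.mp h)]
  · rw [max_eq_left h, Nat.max_eq_left (Fin.le_def.mp h)]

lemma threshold_adj_iff (n : ℕ) (i j : Fin n) :
    (thresholdGraph n (fun q => decide (q.val % 2 = 1))).Adj i j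
      ↔ (i.val ≠ j.val ∧ max i.val j.val % 2 = 1) := by
  show (i ≠ j ∧ decide ((max i j).val % 2 = 1) = true) ↔ _
  rw [fin_val_max, decide_eq_true_iff]
  constructor
  · rintro ⟨h1, h2⟩
    exact ⟨fun h => h1 (Fin.ext h), h2⟩
  · rintro ⟨h1, h2⟩
    exact ⟨fun h => h1 (congrArg Fin.val h), h2⟩

lemma oddCount (p : ℕ) : ∀ n, p < n →
    ((Finset.range n).filter (fun x => x ≠ p ∧ max p x % 2 = 1)).card
      = (if p % 2 = 1 then p else 0) + n / 2 - (p + 1) / 2 := by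
  intro n
  induction n with
  | zero => omega
  | succ n ih =>
    intro hpn
    rcases Nat.lt_or_ge p n with hp | hp
    · have hcard := ih hp
      rw [Finset.range_add_one, Finset.filter_insert]
      have hmax : max p n = n := Nat.max_eq_right hp.le
      by_cases hn : n % 2 = 1
      · rw [if_pos ⟨by omega, by rw [hmax]; exact hn⟩,
          Finset.card_insert_of_notMem (by simp)]
        omega
      · rw [if_neg (by rw [hmax]; tauto)]
        omega
    · have hpe : p = n := by omega
      subst hpe
      have hcong : ∀ x ∈ Finset.range (p + 1),
          ((x ≠ p ∧ max p x % 2 = 1) ↔ (x ≠ p ∧ p % 2 = 1)) := by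
        intro x hx
        simp only [Finset.mem_range] at hx
        constructor
        · rintro ⟨hxp, h⟩
          exact ⟨hxp, by rwa [Nat.max_eq_left (by omega)] at h⟩
        · rintro ⟨hxp, h⟩
          exact ⟨hxp, by rwa [Nat.max_eq_left (by omega)]⟩
      rw [Finset.filter_congr hcong]
      by_cases hp1 : p % 2 = 1
      · have h1 : ((Finset.range (p + 1)).filter (fun x => x ≠ p ∧ p % 2 = 1))
            = (Finset.range (p + 1)).filter (fun x => x ≠ p) := by
          apply Finset.filter_congr
          intro x _
          simp [hp1]
        have h2 : ((Finset.range (p + 1)).filter (fun x => x ≠ p)) = Finset.range p := by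
          ext x
          simp only [Finset.mem_filter, Finset.mem_range]
          omega
        rw [h1, h2, Finset.card_range, if_pos hp1]
        omega
      · have h1 : ((Finset.range (p + 1)).filter (fun x => x ≠ p ∧ p % 2 = 1)) = ∅ := by
          apply Finset.filter_false_of_mem
          tauto
        rw [h1]
        simp only [Finset.card_empty]
        rw [if_neg hp1]
        omega

def dg (m p : ℕ) : ℕ := if p % 2 = 1 then m + p / 2 else m - p / 2

lemma degree_eq (m : ℕ) (p : Fin (2 * m)) :
    (thresholdGraph (2 * m) (fun q => decide (q.val % 2 = 1))).degree p = dg m p.val := by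
  classical
  have hnb : (thresholdGraph (2 * m) (fun q => decide (q.val % 2 = 1))).neighborFinset p
      = Finset.univ.filter
          (fun i : Fin (2 * m) => i.val ≠ p.val ∧ max p.val i.val % 2 = 1) := by
    ext i
    rw [SimpleGraph.mem_neighborFinset, threshold_adj_iff]
    simp only [Finset.mem_filter, Finset.mem_univ, true_and]
    constructor
    · rintro ⟨h1, h2⟩; exact ⟨h1.symm, h2⟩
    · rintro ⟨h1, h2⟩; exact ⟨h1.symm, h2⟩
  rw [SimpleGraph.degree, hnb, Finset.card_filter]
  rw [Fin.sum_univ_eq_sum_range (fun x => if x ≠ p.val ∧ max p.val x % 2 = 1 then 1 else 0)]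
  rw [← Finset.card_filter]
  rw [oddCount p.val (2 * m) p.isLt]
  have hp := p.isLt
  unfold dg
  by_cases h : p.val % 2 = 1
  · rw [if_pos h, if_pos h]
    omega
  · rw [if_neg h, if_neg h]
    omega

lemma prod_range_two_mul (f : ℕ → ℕ) (m : ℕ) :
    ∏ x ∈ Finset.range (2 * m), f x = ∏ k ∈ Finset.range m, (f (2 * k) * f (2 * k + 1)) := by
  induction m with
  | zero => simp
  | succ m ih =>
    rw [show 2 * (m + 1) = 2 * m + 1 + 1 by ring, Finset.prod_range_succ,
      Finset.prod_range_succ, ih, Finset.prod_range_succ]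
    ring

lemma prod_dg (m : ℕ) (hm : 1 ≤ m) :
    2 * ∏ k ∈ Finset.range m, ((m - k) * (m + k)) = Nat.factorial (2 * m) := by
  have h1 : ∏ k ∈ Finset.range m, (m - k) = Nat.factorial m := by
    rw [← Finset.prod_range_reflect, ← Finset.prod_range_add_one_eq_factorial]
    apply Finset.prod_congr rfl
    intro k hk
    simp only [Finset.mem_range] at hk
    omega
  have h2 : (2 * m).factorial = Nat.factorial m * ∏ k ∈ Finset.range m, (m + k + 1) := by
    rw [← Finset.prod_range_add_one_eq_factorial, show 2 * m = m + m by ring,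
      Finset.prod_range_add, ← Finset.prod_range_add_one_eq_factorial]
  have h3 : m * ∏ k ∈ Finset.range m, (m + k + 1)
      = (2 * m) * ∏ k ∈ Finset.range m, (m + k) := by
    have ha : ∏ k ∈ Finset.range (m + 1), (m + k)
        = m * ∏ k ∈ Finset.range m, (m + k + 1) := by
      rw [Finset.prod_range_succ']
      show (∏ x ∈ Finset.range m, (m + x + 1)) * (m + 0) = _
      rw [Nat.add_zero, mul_comm]
    have hb : ∏ k ∈ Finset.range (m + 1), (m + k)
        = (∏ k ∈ Finset.range m, (m + k)) * (2 * m) := by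
      rw [Finset.prod_range_succ]
      congr 1
      omega
    rw [← ha, hb]; ring
  rw [Finset.prod_mul_distrib, h1, h2]
  have h4 := Nat.eq_of_mul_eq_mul_left (show 0 < m by omega)
    (show m * (2 * ∏ k ∈ Finset.range m, (m + k)) = m * ∏ k ∈ Finset.range m, (m + k + 1) by
      rw [h3]; ring)
  rw [← h4]
  ring

/-- The generic adjacency matrix of the alternating threshold graph. -/
noncomputable def MM (n : ℕ) : Matrix (Fin n) (Fin n) ℝ :=
  Matrix.of fun i j => if i.val ≠ j.val ∧ max i.val j.val % 2 = 1 then 1 else 0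

lemma det_MM (m : ℕ) : (MM (2 * m)).det = (-1 : ℝ) ^ m := by
  induction m with
  | zero =>
    rw [show (2 * 0) = 0 by ring]
    simp [Matrix.det_isEmpty]
  | succ m ih =>
    rw [show 2 * (m + 1) = 2 * m + 2 by ring]
    set B : Matrix (Fin (2 * m)) (Fin 2) ℝ :=
      Matrix.of fun _ j => if j.val = 1 then (1 : ℝ) else 0 with hB
    set C : Matrix (Fin 2) (Fin (2 * m)) ℝ :=
      Matrix.of fun i _ => if i.val = 1 then (1 : ℝ) else 0 with hC
    set D : Matrix (Fin 2) (Fin 2) ℝ :=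
      Matrix.of fun i j => if i ≠ j then (1 : ℝ) else 0 with hD
    set e : Fin (2 * m) ⊕ Fin 2 ≃ Fin (2 * m + 2) := finSumFinEquiv with he
    have hinl : ∀ i : Fin (2 * m), (e (Sum.inl i)).val = i.val := by
      intro i; simp [he]
    have hinr : ∀ i : Fin 2, (e (Sum.inr i)).val = 2 * m + i.val := by
      intro i; simp [he]
    have hsub : (MM (2 * m + 2)).submatrix e e = Matrix.fromBlocks (MM (2 * m)) B C D := by
      ext i j
      cases i with
      | inl i =>
        cases j with
        | inl j =>
          simp only [Matrix.submatrix_apply, Matrix.fromBlocks_apply₁₁]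
          show MM (2 * m + 2) (e (Sum.inl i)) (e (Sum.inl j)) = MM (2 * m) i j
          simp only [MM, Matrix.of_apply, hinl]
        | inr j =>
          simp only [Matrix.submatrix_apply, Matrix.fromBlocks_apply₁₂]
          show MM (2 * m + 2) (e (Sum.inl i)) (e (Sum.inr j)) = B i j
          simp only [MM, hB, Matrix.of_apply, hinl, hinr]
          have him : i.val < 2 * m := i.isLt
          have hjm : j.val < 2 := j.isLt
          have hmax : max i.val (2 * m + j.val) = 2 * m + j.val :=
            Nat.max_eq_right (by omega)
          rw [hmax]
          by_cases h1 : j.val = 1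
          · rw [if_pos h1, if_pos ⟨by omega, by omega⟩]
          · rw [if_neg h1, if_neg (by omega)]
      | inr i =>
        cases j with
        | inl j =>
          simp only [Matrix.submatrix_apply, Matrix.fromBlocks_apply₂₁]
          show MM (2 * m + 2) (e (Sum.inr i)) (e (Sum.inl j)) = C i j
          simp only [MM, hC, Matrix.of_apply, hinl, hinr]
          have him : i.val < 2 := i.isLt
          have hjm : j.val < 2 * m := j.isLt
          have hmax : max (2 * m + i.val) j.val = 2 * m + i.val :=
            Nat.max_eq_left (by omega)
          rw [hmax]
          by_cases h1 : i.val = 1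
          · rw [if_pos h1, if_pos ⟨by omega, by omega⟩]
          · rw [if_neg h1, if_neg (by omega)]
        | inr j =>
          simp only [Matrix.submatrix_apply, Matrix.fromBlocks_apply₂₂]
          show MM (2 * m + 2) (e (Sum.inr i)) (e (Sum.inr j)) = D i j
          simp only [MM, hD, Matrix.of_apply, hinr]
          have him : i.val < 2 := i.isLt
          have hjm : j.val < 2 := j.isLt
          by_cases hij : i = j
          · subst hij
            rw [if_neg (by omega), if_neg (by simp)]
          · have hv : i.val ≠ j.val := fun h => hij (Fin.ext h)
            have hmax : max (2 * m + i.val) (2 * m + j.val) % 2 = 1 := by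
              rcases Nat.le_total (2 * m + i.val) (2 * m + j.val) with h | h
              · rw [Nat.max_eq_right h]; omega
              · rw [Nat.max_eq_left h]; omega
            rw [if_pos ⟨by omega, hmax⟩, if_pos hij]
    have hDD : D * D = 1 := by
      ext i j
      fin_cases i <;> fin_cases j <;>
        simp [hD, Matrix.mul_apply, Fin.sum_univ_two, Matrix.one_apply]
    haveI : Invertible D := invertibleOfRightInverse D D hDD
    have hinvD : ⅟D = D := invOf_eq_right_inv hDD
    have hBDC : B * ⅟D * C = 0 := by
      rw [hinvD]
      ext i j
      simp [hB, hC, hD, Matrix.mul_apply, Fin.sum_univ_two]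
    have hdetD : D.det = -1 := by
      rw [Matrix.det_fin_two]
      simp [hD]
    calc (MM (2 * m + 2)).det = ((MM (2 * m + 2)).submatrix e e).det :=
          (Matrix.det_submatrix_equiv_self e _).symm
      _ = (Matrix.fromBlocks (MM (2 * m)) B C D).det := by rw [hsub]
      _ = D.det * (MM (2 * m) - B * ⅟D * C).det := Matrix.det_fromBlocks₂₂ _ _ _ _
      _ = (-1 : ℝ) ^ (m + 1) := by
          rw [hBDC, sub_zero, hdetD, ih]
          ring

end Aux

/-- For the connected threshold graph on `n = 2m` vertices with
binary string `(01)^m` (alternately adding an isolated and a dominating vertex),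
the determinant of the normalized adjacency matrix equals `(-1)^{n/2} · 2/n!`. -/
theorem threshold_alternating_det (m : ℕ) (hm : 1 ≤ m) :
    let G := thresholdGraph (2 * m) (fun p => decide (p.val % 2 = 1))
    (NA G).det = (-1 : ℝ) ^ m * 2 / (Nat.factorial (2 * m)) := by
  intro G
  have hAdj : G.adjMatrix ℝ = MM (2 * m) := by
    ext i j
    simp only [SimpleGraph.adjMatrix_apply, MM, Matrix.of_apply]
    by_cases h : G.Adj i j
    · rw [if_pos h, if_pos ((threshold_adj_iff (2 * m) i j).mp h)]
    · rw [if_neg h, if_neg (fun hc => h ((threshold_adj_iff (2 * m) i j).mpr hc))]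
  have hprodnat : 2 * (∏ p : Fin (2 * m), dg m p.val) = Nat.factorial (2 * m) := by
    rw [Fin.prod_univ_eq_prod_range (fun x => dg m x) (2 * m), prod_range_two_mul]
    rw [show (∏ k ∈ Finset.range m, (dg m (2 * k) * dg m (2 * k + 1)))
        = ∏ k ∈ Finset.range m, ((m - k) * (m + k)) from
      Finset.prod_congr rfl fun k _ => by
        unfold dg
        rw [if_neg (by omega), if_pos (by omega),
          Nat.mul_div_cancel_left k (by norm_num : 0 < 2),
          show (2 * k + 1) / 2 = k by omega]]
    exact prod_dg m hm
  have hfact_pos : (0 : ℝ) < Nat.factorial (2 * m) := by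
    exact_mod_cast Nat.factorial_pos (2 * m)
  have hdg_pos : ∀ p : Fin (2 * m), 0 < dg m p.val := by
    intro p
    have := p.isLt
    unfold dg
    by_cases h : p.val % 2 = 1 <;> simp only [h, if_true, if_false] <;> omega
  rw [NA, Matrix.det_mul, Matrix.det_diagonal, hAdj, det_MM]
  have hdegs : (∏ i : Fin (2 * m), ((G.degree i : ℝ))⁻¹)
      = ((∏ p : Fin (2 * m), dg m p.val : ℕ) : ℝ)⁻¹ := by
    calc (∏ i : Fin (2 * m), ((G.degree i : ℝ))⁻¹)
        = ∏ i : Fin (2 * m), ((dg m i.val : ℝ))⁻¹ := by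
          apply Finset.prod_congr rfl
          intro i _
          rw [degree_eq m i]
      _ = (∏ i : Fin (2 * m), ((dg m i.val : ℝ)))⁻¹ := by
          rw [Finset.prod_inv_distrib]
      _ = ((∏ p : Fin (2 * m), dg m p.val : ℕ) : ℝ)⁻¹ := by
          rw [Nat.cast_prod]
  rw [hdegs]
  have hP : ((∏ p : Fin (2 * m), dg m p.val : ℕ) : ℝ)
      = (Nat.factorial (2 * m) : ℝ) / 2 := by
    have hr : (2 : ℝ) * ((∏ p : Fin (2 * m), dg m p.val : ℕ) : ℝ)
        = (Nat.factorial (2 * m) : ℝ) := by exact_mod_cast hprodnat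
    rw [eq_div_iff (two_ne_zero)]
    linarith
  rw [hP]
  have hne : (Nat.factorial (2 * m) : ℝ) ≠ 0 := ne_of_gt hfact_pos
  field_simp
end

section
/- Let Γ be a connected threshold graph with string 0^{s₁}1^{t₁}⋯0^{s_k}1^{t_k}, t = Σtᵢ, Sᵢ = s₁+⋯+sᵢ. For each i with tᵢ ≥ 2, the number −1/(t + Sᵢ − 1) is an eigenvalue of the normalized adjacency matrix 𝒜 with multiplicity at least tᵢ − 1. -/
open Matrix Polynomial BigOperators Finset

open Module

lemma charpoly_scalar (r : ℕ) (μ : ℝ) :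
    (Matrix.diagonal (fun _ : Fin r => μ)).charpoly = (X - C μ) ^ r := by
  have h : charmatrix (Matrix.diagonal (fun _ : Fin r => μ))
      = Matrix.diagonal (fun _ : Fin r => (X : ℝ[X]) - C μ) := by
    ext i j
    by_cases h : i = j
    · subst h; simp
    · simp [h, Matrix.diagonal_apply_ne _ h]
  rw [Matrix.charpoly, h, Matrix.det_diagonal]
  simp

lemma le_count_charpoly_roots {n r : ℕ} (M : Matrix (Fin n) (Fin n) ℝ) (μ : ℝ)
    (v : Fin r → (Fin n → ℝ)) (hli : LinearIndependent ℝ v)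
    (hev : ∀ j, M *ᵥ v j = μ • v j) : r ≤ M.charpoly.roots.count μ := by
  classical
  set f := M.mulVecLin with hf
  set E := LinearMap.ker (f - μ • LinearMap.id) with hE
  have hvE : ∀ j, v j ∈ E := by
    intro j
    simp only [hE, LinearMap.mem_ker, LinearMap.sub_apply, LinearMap.smul_apply,
      LinearMap.id_apply, Matrix.mulVecLin_apply, hf]
    rw [hev j]; abel
  have hr : r ≤ finrank ℝ E := by
    let v' : Fin r → E := fun j => ⟨v j, hvE j⟩
    have hli' : LinearIndependent ℝ v' :=
      LinearIndependent.of_comp E.subtype (by exact hli)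
    simpa using hli'.fintype_card_le_finrank
  obtain ⟨W, hW⟩ := Submodule.exists_isCompl E
  let e := Submodule.prodEquivOfIsCompl E W hW
  let g := e.symm.conj f
  have hMf : M.charpoly = f.charpoly := by
    rw [← LinearMap.charpoly_toMatrix f (Pi.basisFun ℝ (Fin n))]
    congr 1
    ext i j
    simp [LinearMap.toMatrix_apply, hf, Matrix.mulVecLin_apply, Matrix.mulVec_single]
  have hgf : g.charpoly = f.charpoly := e.symm.charpoly_conj f
  let bE := Module.finBasis ℝ E
  let bW := Module.finBasis ℝ W
  let b := bE.prod bW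
  set N := LinearMap.toMatrix b b g with hN
  have hgN : g.charpoly = N.charpoly := (LinearMap.charpoly_toMatrix g b).symm
  have hcol : ∀ x j, N x (Sum.inl j) = if x = Sum.inl j then μ else 0 := by
    intro x j
    have hb : b (Sum.inl j) = (bE j, 0) :=
      Prod.ext (Basis.prod_apply_inl_fst _ _ _) (Basis.prod_apply_inl_snd _ _ _)
    have hfe : f ((bE j : E) : Fin n → ℝ) = μ • ((bE j : E) : Fin n → ℝ) := by
      have h2 : (f - μ • LinearMap.id : (Fin n → ℝ) →ₗ[ℝ] Fin n → ℝ) ((bE j : E) : Fin n → ℝ) = 0 := (bE j).2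
      have hx : f ((bE j : E) : Fin n → ℝ) - μ • ((bE j : E) : Fin n → ℝ) = 0 := by
        rwa [LinearMap.sub_apply, LinearMap.smul_apply, LinearMap.id_apply] at h2
      exact sub_eq_zero.mp hx
    have hgb : g (b (Sum.inl j)) = μ • b (Sum.inl j) := by
      rw [hb]
      show e.symm (f (e (bE j, 0))) = μ • (bE j, (0 : W))
      have he1 : e (bE j, (0 : W)) = ((bE j : E) : Fin n → ℝ) := by
        simp [e, Submodule.coe_prodEquivOfIsCompl']
      rw [he1, hfe]
      have : (μ • ((bE j : E) : Fin n → ℝ)) = ((μ • bE j : E) : Fin n → ℝ) := rfl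
      rw [this, Submodule.prodEquivOfIsCompl_symm_apply_left]
      simp [Prod.smul_mk]
    rw [hN, LinearMap.toMatrix_apply, hgb, _root_.map_smul]
    rw [b.repr_self]
    simp [Finsupp.single_apply, eq_comm]
  have hblock : N = Matrix.fromBlocks (Matrix.diagonal fun _ : Fin (finrank ℝ E) => μ)
      N.toBlocks₁₂ 0 N.toBlocks₂₂ := by
    ext x y
    cases x with
    | inl x =>
      cases y with
      | inl y =>
        rw [hcol]
        simp [Matrix.diagonal_apply, Matrix.fromBlocks, Sum.inl.injEq, eq_comm]
      | inr y => simp [Matrix.fromBlocks, Matrix.toBlocks₁₂]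
    | inr x =>
      cases y with
      | inl y =>
        rw [hcol]
        simp [Matrix.fromBlocks]
      | inr y => simp [Matrix.fromBlocks, Matrix.toBlocks₂₂]
  have hchar : M.charpoly = (X - C μ) ^ (finrank ℝ E) * N.toBlocks₂₂.charpoly := by
    rw [hMf, ← hgf, hgN]
    conv_lhs => rw [hblock]
    rw [Matrix.charpoly_fromBlocks_zero₂₁, charpoly_scalar]
  rw [hchar]
  have h1 : ((X - C μ) ^ (finrank ℝ E) : ℝ[X]) ≠ 0 := pow_ne_zero _ (X_sub_C_ne_zero μ)
  have h2 : N.toBlocks₂₂.charpoly ≠ 0 := (Matrix.charpoly_monic _).ne_zero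
  rw [Polynomial.roots_mul (mul_ne_zero h1 h2), Multiset.count_add, roots_pow, roots_X_sub_C,
    Multiset.count_nsmul, Multiset.count_singleton]
  have hfin := le_trans hr (Nat.le_add_right (finrank ℝ E)
    (N.toBlocks₂₂.charpoly.roots.count μ))
  simpa using hfin



lemma li_single_sub {n r : ℕ} (p₀ : Fin n) (q : Fin r → Fin n)
    (hinj : Function.Injective q) (hne : ∀ a, q a ≠ p₀) :
    LinearIndependent ℝ (fun a => (Pi.single (q a) 1 - Pi.single p₀ 1 : Fin n → ℝ)) := by
  classical
  rw [Fintype.linearIndependent_iff]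
  intro g hg a
  have h := congrFun hg (q a)
  rw [Finset.sum_apply] at h
  simp only [Pi.smul_apply, Pi.sub_apply, Pi.single_apply, smul_eq_mul, hne a, if_false,
    sub_zero, hinj.eq_iff, mul_ite, mul_one, mul_zero, Finset.sum_ite_eq, Finset.mem_univ,
    if_true, Pi.zero_apply] at h
  exact h


section Graph

variable (k : ℕ) (s t : ℕ → ℕ)

lemma cum_mono : Monotone (cum s t) := fun a b h =>
  Finset.sum_le_sum_of_subset (Finset.range_subset_range.mpr h)

lemma cum_succ (j : ℕ) : cum s t (j + 1) = cum s t j + (s j + t j) :=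
  Finset.sum_range_succ _ _

lemma isOne_iff (m : ℕ) : isOne k s t m = true ↔
    ∃ j < k, cum s t j + s j ≤ m ∧ m < cum s t j + s j + t j := by
  simp [isOne]

-- adjacency unfolding
lemma TG_adj (p q : Fin (cum s t k)) :
    (TG k s t).Adj p q ↔ p ≠ q ∧ isOne k s t (max p.val q.val) = true := by
  have hval : ((max p q : Fin (cum s t k)) : ℕ) = max p.val q.val := by
    rcases le_total p q with h | h
    · rw [max_eq_right h, max_eq_right (Fin.le_def.mp h)]
    · rw [max_eq_left h, max_eq_left (Fin.le_def.mp h)]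
  show p ≠ q ∧ isOne k s t ((max p q : Fin (cum s t k)) : ℕ) = true ↔ _
  rw [hval]

variable {k s t} (hik : ∀ i, i < k → True)

/-- degree of a vertex in cell `i`. -/
lemma degree_cell (i : ℕ) (hik : i < k) (P : ℕ) (hPn' : P < cum s t k)
    (h1 : cum s t i + s i ≤ P) (h2 : P < cum s t i + s i + t i) :
    (TG k s t).degree ⟨P, hPn'⟩ + 1
      = (∑ j ∈ Finset.range k, t j) + ∑ j ∈ Finset.range (i + 1), s j := by
  classical
  set n := cum s t k with hn
  have honeP : isOne k s t P = true := (isOne_iff k s t P).mpr ⟨i, hik, h1, h2⟩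
  have hPn : P < n := hPn'
  -- degree as a count over `range n`
  have hdeg : (TG k s t).degree ⟨P, hPn'⟩ =
      ((Finset.range n).filter (fun m => m ≠ P ∧ isOne k s t (max P m) = true)).card := by
    show ((TG k s t).neighborFinset ⟨P, hPn'⟩).card = _
    rw [SimpleGraph.neighborFinset_eq_filter, Finset.card_filter, Finset.card_filter,
      ← Fin.sum_univ_eq_sum_range (fun m => if m ≠ P ∧ isOne k s t (max P m) = true then 1 else 0) n]
    refine Finset.sum_congr rfl fun q _ => ?_
    refine if_congr ?_ rfl rfl
    rw [TG_adj]
    have hne : (⟨P, hPn'⟩ : Fin (cum s t k)) ≠ q ↔ q.val ≠ P := by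
      rw [Ne, Ne, Fin.ext_iff, eq_comm]
    rw [hne]
  -- split into below and above
  have hsplit : ((Finset.range n).filter (fun m => m ≠ P ∧ isOne k s t (max P m) = true)) =
      (Finset.range P) ∪ ((Finset.range n).filter (fun m => P < m ∧ isOne k s t m = true)) := by
    ext m
    simp only [Finset.mem_filter, Finset.mem_range, Finset.mem_union]
    constructor
    · rintro ⟨hmn, hne, hone⟩
      rcases lt_trichotomy m P with h | h | h
      · exact Or.inl h
      · exact absurd h hne
      · exact Or.inr ⟨hmn, h, by rwa [max_eq_right h.le] at hone⟩
    · rintro (h | ⟨hmn, h, hone⟩)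
      · exact ⟨h.trans hPn, h.ne, by rwa [max_eq_left h.le]⟩
      · exact ⟨hmn, h.ne', by rwa [max_eq_right h.le]⟩
  have hdisj : Disjoint (Finset.range P)
      ((Finset.range n).filter (fun m => P < m ∧ isOne k s t m = true)) := by
    rw [Finset.disjoint_left]
    intro m hm hm'
    have := (Finset.mem_filter.mp hm').2.1
    have := Finset.mem_range.mp hm
    omega
  -- count of ones above P
  have habove : ((Finset.range n).filter (fun m => P < m ∧ isOne k s t m = true)) =
      (Finset.range k).biUnion
        (fun j => Finset.Ico (max (cum s t j + s j) (P + 1)) (cum s t j + s j + t j)) := by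
    ext m
    simp only [Finset.mem_filter, Finset.mem_range, Finset.mem_biUnion, Finset.mem_Ico,
      max_le_iff]
    constructor
    · rintro ⟨hmn, hPm, hone⟩
      obtain ⟨j, hjk, hj1, hj2⟩ := (isOne_iff k s t m).mp hone
      exact ⟨j, hjk, ⟨hj1, hPm⟩, hj2⟩
    · rintro ⟨j, hjk, ⟨hj1, hPm⟩, hj2⟩
      have hmn : m < n := by
        have : cum s t j + s j + t j ≤ cum s t (j + 1) := by rw [cum_succ]; omega
        have h2 := cum_mono s t (show j + 1 ≤ k by omega)
        omega
      exact ⟨hmn, hPm, (isOne_iff k s t m).mpr ⟨j, hjk, hj1, hj2⟩⟩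
  have hdisj2 : ∀ j₁ ∈ Finset.range k, ∀ j₂ ∈ Finset.range k, j₁ ≠ j₂ →
      Disjoint (Finset.Ico (max (cum s t j₁ + s j₁) (P + 1)) (cum s t j₁ + s j₁ + t j₁))
        (Finset.Ico (max (cum s t j₂ + s j₂) (P + 1)) (cum s t j₂ + s j₂ + t j₂)) := by
    have key : ∀ j₁ j₂ : ℕ, j₁ < j₂ →
        Disjoint (Finset.Ico (max (cum s t j₁ + s j₁) (P + 1)) (cum s t j₁ + s j₁ + t j₁))
          (Finset.Ico (max (cum s t j₂ + s j₂) (P + 1)) (cum s t j₂ + s j₂ + t j₂)) := by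
      intro j₁ j₂ hlt
      rw [Finset.disjoint_left]
      intro m hm1 hm2
      rw [Finset.mem_Ico, max_le_iff] at hm1 hm2
      have e1 : cum s t j₁ + s j₁ + t j₁ ≤ cum s t (j₁ + 1) := by rw [cum_succ]; omega
      have e2 := cum_mono s t (show j₁ + 1 ≤ j₂ by omega)
      omega
    intro j₁ _ j₂ _ hne
    rcases lt_or_gt_of_ne hne with h | h
    · exact key _ _ h
    · exact (key _ _ h).symm
  have hcard : ((Finset.range n).filter (fun m => P < m ∧ isOne k s t m = true)).card =
      ∑ j ∈ Finset.range k,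
        ((cum s t j + s j + t j) - max (cum s t j + s j) (P + 1)) := by
    rw [habove, Finset.card_biUnion hdisj2]
    exact Finset.sum_congr rfl fun j _ => Nat.card_Ico _ _
  -- evaluate the sum
  have hterm : ∀ j < k, (cum s t j + s j + t j) - max (cum s t j + s j) (P + 1) =
      if j < i then 0 else if j = i then cum s t i + s i + t i - (P + 1) else t j := by
    intro j hjk
    rcases lt_trichotomy j i with h | h | h
    · have e1 : cum s t j + s j + t j ≤ cum s t (j + 1) := by rw [cum_succ]; omega
      have e2 : cum s t (j + 1) ≤ cum s t i := cum_mono s t (show j + 1 ≤ i by omega)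
      rw [if_pos h]
      omega
    · subst h
      rw [if_neg (lt_irrefl _), if_pos rfl]
      omega
    · have e1 : cum s t i + s i + t i ≤ cum s t (i + 1) := by rw [cum_succ]; omega
      have e2 : cum s t (i + 1) ≤ cum s t j := cum_mono s t (show i + 1 ≤ j by omega)
      rw [if_neg (by omega), if_neg (by omega)]
      omega
  have hsum : ∑ j ∈ Finset.range k,
      ((cum s t j + s j + t j) - max (cum s t j + s j) (P + 1)) =
      (cum s t i + s i + t i - (P + 1)) + ∑ j ∈ Finset.Ico (i + 1) k, t j := by
    rw [Finset.range_eq_Ico, ← Finset.sum_Ico_consecutive _ (Nat.zero_le (i + 1))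
      (Nat.succ_le_of_lt hik), ← Finset.range_eq_Ico, Finset.sum_range_succ]
    have e0 : ∑ j ∈ Finset.range i,
        ((cum s t j + s j + t j) - max (cum s t j + s j) (P + 1)) = 0 := by
      apply Finset.sum_eq_zero
      intro j hj
      rw [Finset.mem_range] at hj
      rw [hterm j (hj.trans hik), if_pos hj]
    rw [e0, zero_add, hterm i hik, if_neg (lt_irrefl i), if_pos rfl]
    congr 1
    apply Finset.sum_congr rfl
    intro j hj
    rw [Finset.mem_Ico] at hj
    rw [hterm j hj.2, if_neg (by omega), if_neg (by omega)]
  -- assemble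
  have hcards : (TG k s t).degree ⟨P, hPn'⟩ = P + ((cum s t i + s i + t i - (P + 1)) +
      ∑ j ∈ Finset.Ico (i + 1) k, t j) := by
    rw [hdeg, hsplit, Finset.card_union_of_disjoint hdisj, Finset.card_range, hcard, hsum]
  rw [hcards]
  have hcum_i : cum s t i = ∑ j ∈ Finset.range i, s j + ∑ j ∈ Finset.range i, t j := by
    rw [cum, Finset.sum_add_distrib]
  have htt : ∑ j ∈ Finset.range k, t j =
      (∑ j ∈ Finset.range i, t j + t i) + ∑ j ∈ Finset.Ico (i + 1) k, t j := by
    rw [Finset.range_eq_Ico, ← Finset.sum_Ico_consecutive _ (Nat.zero_le (i + 1))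
      (Nat.succ_le_of_lt hik), ← Finset.range_eq_Ico, Finset.sum_range_succ]
  have hSi : ∑ j ∈ Finset.range (i + 1), s j = ∑ j ∈ Finset.range i, s j + s i :=
    Finset.sum_range_succ _ _
  omega


lemma TG_adj_val (p q : Fin (cum s t k)) :
    (TG k s t).Adj p q ↔ p.val ≠ q.val ∧ isOne k s t (max p.val q.val) = true := by
  rw [TG_adj]
  constructor <;> rintro ⟨a, b⟩ <;>
    exact ⟨by simpa [Ne, Fin.ext_iff] using a, b⟩

lemma twin_mulVec (i : ℕ) (hik : i < k) (P Q : ℕ)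
    (hPn : P < cum s t k) (hQn : Q < cum s t k)
    (hP1 : cum s t i + s i ≤ P) (hP2 : P < cum s t i + s i + t i)
    (hQ1 : cum s t i + s i ≤ Q) (hQ2 : Q < cum s t i + s i + t i) (hne : P ≠ Q) :
    ((TG k s t).adjMatrix ℝ) *ᵥ
        (Pi.single ⟨P, hPn⟩ 1 - Pi.single ⟨Q, hQn⟩ 1) =
      -(Pi.single ⟨P, hPn⟩ 1 - Pi.single ⟨Q, hQn⟩ 1) := by
  classical
  have hcell : ∀ m, cum s t i + s i ≤ m → m < cum s t i + s i + t i →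
      isOne k s t m = true := fun m hm1 hm2 => (isOne_iff k s t m).mpr ⟨i, hik, hm1, hm2⟩
  ext r
  rw [Matrix.mulVec_sub, Matrix.mulVec_single, Matrix.mulVec_single]
  simp only [Pi.sub_apply, Pi.neg_apply, Pi.single_apply, SimpleGraph.adjMatrix_apply, mul_one]
  have hrP : (r = (⟨P, hPn⟩ : Fin (cum s t k))) ↔ r.val = P := Fin.ext_iff
  have hrQ : (r = (⟨Q, hQn⟩ : Fin (cum s t k))) ↔ r.val = Q := Fin.ext_iff
  by_cases hRP : r.val = P
  · have hAp : ¬ (TG k s t).Adj r ⟨P, hPn⟩ := fun h => ((TG_adj_val _ _).mp h).1 hRP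
    have hAq : (TG k s t).Adj r ⟨Q, hQn⟩ := by
      rw [TG_adj_val]
      refine ⟨by omega, hcell (max r.val Q) (by omega) (by omega)⟩
    have hQ' : r.val ≠ Q := by omega
    norm_num [hAp, hAq, hrP, hrQ, hRP, hQ', hne]
  · by_cases hRQ : r.val = Q
    · have hAq : ¬ (TG k s t).Adj r ⟨Q, hQn⟩ := fun h => ((TG_adj_val _ _).mp h).1 hRQ
      have hAp : (TG k s t).Adj r ⟨P, hPn⟩ := by
        rw [TG_adj_val]
        refine ⟨by omega, hcell (max r.val P) (by omega) (by omega)⟩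
      norm_num [hAp, hAq, hrP, hrQ, hRP, hRQ, hne, Ne.symm hne]
    · have hiff : (TG k s t).Adj r ⟨P, hPn⟩ ↔ (TG k s t).Adj r ⟨Q, hQn⟩ := by
        rw [TG_adj_val, TG_adj_val]
        rcases lt_or_ge r.val P with h1 | h1
        · rcases lt_or_ge r.val Q with h2 | h2
          · constructor <;> intro _
            · exact ⟨hRQ, by rw [max_eq_right h2.le]; exact hcell _ hQ1 hQ2⟩
            · exact ⟨hRP, by rw [max_eq_right h1.le]; exact hcell _ hP1 hP2⟩
          · constructor <;> intro _
            · exact ⟨hRQ, by rw [max_eq_left h2]; exact hcell _ (by omega) (by omega)⟩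
            · exact ⟨hRP, by rw [max_eq_right h1.le]; exact hcell _ hP1 hP2⟩
        · have h1' : P < r.val := by omega
          rcases lt_or_ge r.val Q with h2 | h2
          · constructor <;> intro _
            · exact ⟨hRQ, by rw [max_eq_right h2.le]; exact hcell _ hQ1 hQ2⟩
            · exact ⟨hRP, by rw [max_eq_left h1]; exact hcell _ (by omega) (by omega)⟩
          · have h2' : Q < r.val := by omega
            rw [max_eq_left h1, max_eq_left h2]
            constructor <;> rintro ⟨_, hb⟩
            · exact ⟨hRQ, hb⟩
            · exact ⟨hRP, hb⟩
      by_cases hA : (TG k s t).Adj r ⟨P, hPn⟩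
      · norm_num [hA, hiff.mp hA, hrP, hrQ, hRP, hRQ]
      · have hA' : ¬ (TG k s t).Adj r ⟨Q, hQn⟩ := fun h => hA (hiff.mpr h)
        norm_num [hA, hA', hrP, hrQ, hRP, hRQ]


lemma NA_eigen (i : ℕ) (hik : i < k) (hti : 2 ≤ t i) (P Q : ℕ)
    (hPn : P < cum s t k) (hQn : Q < cum s t k)
    (hP1 : cum s t i + s i ≤ P) (hP2 : P < cum s t i + s i + t i)
    (hQ1 : cum s t i + s i ≤ Q) (hQ2 : Q < cum s t i + s i + t i) (hne : P ≠ Q) :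
    NA (TG k s t) *ᵥ (Pi.single ⟨P, hPn⟩ 1 - Pi.single ⟨Q, hQn⟩ 1 : Fin (cum s t k) → ℝ) =
      (-1 / (((∑ j ∈ Finset.range k, t j) + ∑ j ∈ Finset.range (i + 1), s j - 1 : ℕ) : ℝ)) •
        (Pi.single ⟨P, hPn⟩ 1 - Pi.single ⟨Q, hQn⟩ 1 : Fin (cum s t k) → ℝ) := by
  classical
  set d : ℕ := (∑ j ∈ Finset.range k, t j) + ∑ j ∈ Finset.range (i + 1), s j - 1 with hd
  have hti_le : t i ≤ ∑ j ∈ Finset.range k, t j :=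
    Finset.single_le_sum (fun j _ => Nat.zero_le (t j)) (Finset.mem_range.mpr hik)
  have hdegP : (TG k s t).degree ⟨P, hPn⟩ = d := by
    have := degree_cell i hik P hPn hP1 hP2
    omega
  have hdegQ : (TG k s t).degree ⟨Q, hQn⟩ = d := by
    have := degree_cell i hik Q hQn hQ1 hQ2
    omega
  have hd1 : 1 ≤ d := by
    have := degree_cell i hik P hPn hP1 hP2
    omega
  have hd0 : ((d : ℕ) : ℝ) ≠ 0 := Nat.cast_ne_zero.mpr (by omega)
  rw [NA, ← Matrix.mulVec_mulVec,
    twin_mulVec i hik P Q hPn hQn hP1 hP2 hQ1 hQ2 hne, Matrix.mulVec_neg]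
  ext r
  simp only [Pi.neg_apply, Matrix.mulVec_diagonal, Pi.smul_apply, smul_eq_mul, Pi.sub_apply,
    Pi.single_apply]
  by_cases hrP : r = ⟨P, hPn⟩
  · subst hrP
    rw [hdegP, if_pos rfl, if_neg (by simp [Fin.ext_iff]; omega)]
    field_simp
  · by_cases hrQ : r = ⟨Q, hQn⟩
    · subst hrQ
      rw [hdegQ, if_pos rfl, if_neg (by simp [Fin.ext_iff]; omega)]
      field_simp
    · rw [if_neg hrP, if_neg hrQ]
      ring


end Graph

/-- For a connected threshold graph `0^{s₁}1^{t₁}⋯0^{s_k}1^{t_k}`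
and each stage `i` with `tᵢ ≥ 2`, the number `-1/(t + Sᵢ - 1)` is an eigenvalue
of the normalized adjacency matrix with (algebraic) multiplicity at least `tᵢ - 1`. -/
theorem threshold_eigenvalue_multiplicity (k : ℕ) (s t : ℕ → ℕ) (hk : 1 ≤ k)
    (hs : ∀ i < k, 1 ≤ s i) (ht : ∀ i < k, 1 ≤ t i)
    (i : ℕ) (hik : i < k) (hti : 2 ≤ t i) :
    let tt := ∑ j ∈ Finset.range k, t j
    let Si := ∑ j ∈ Finset.range (i + 1), s j
    t i - 1 ≤ (NA (TG k s t)).charpoly.roots.count (-1 / ((tt + Si - 1 : ℕ) : ℝ)) := by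
  intro tt Si
  have hle : cum s t i + s i + t i ≤ cum s t k := by
    have e1 : cum s t i + s i + t i ≤ cum s t (i + 1) := by rw [cum_succ]; omega
    have e2 : cum s t (i + 1) ≤ cum s t k := cum_mono s t (show i + 1 ≤ k by omega)
    omega
  set n := cum s t k with hn
  let p₀ : Fin n := ⟨cum s t i + s i, by omega⟩
  let q : Fin (t i - 1) → Fin n := fun a => ⟨cum s t i + s i + 1 + a.val, by
    have := a.2; omega⟩
  have hinj : Function.Injective q := by
    intro a b h
    have := congrArg Fin.val h
    simp only [q] at this
    exact Fin.ext (by omega)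
  have hne : ∀ a, q a ≠ p₀ := by
    intro a
    simp only [q, p₀, Ne, Fin.ext_iff]
    omega
  have hli := li_single_sub p₀ q hinj hne
  refine le_trans ?_ (le_count_charpoly_roots (NA (TG k s t)) _ _ hli fun a => ?_)
  · exact le_rfl
  · exact NA_eigen i hik hti (cum s t i + s i + 1 + a.val) (cum s t i + s i)
      (by have := a.2; omega) (by omega)
      (by omega) (by have := a.2; omega) le_rfl (by omega) (by omega)
end

section
/- Let Γ be a connected threshold graph with string 0^{s₁}1^{t₁}⋯0^{s_k}1^{t_k} and s = Σsᵢ. Then 0 is an eigenvalue of the normalized adjacency matrix 𝒜 with multiplicity at least s − k; explicitly, for each i with sᵢ ≥ 2 there are sᵢ − 1 linearly independent eigenvectors supported on the cell of isolated-type vertices at stage i. -/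
open Matrix Polynomial BigOperators Finset

/-! ### Auxiliary material -/

namespace ThresholdAux

variable (s t : ℕ → ℕ)

lemma cum_mono {a b : ℕ} (h : a ≤ b) : cum s t a ≤ cum s t b :=
  Finset.sum_le_sum_of_subset (Finset.range_subset_range.2 h)

lemma cum_succ (i : ℕ) : cum s t (i + 1) = cum s t i + (s i + t i) :=
  Finset.sum_range_succ _ _

/-- positions in the `0`-cell of stage `i` have `isOne = false`. -/
lemma isOne_false {k : ℕ} (s t : ℕ → ℕ) {i p : ℕ} (hik : i < k)
    (h1 : cum s t i ≤ p) (h2 : p < cum s t i + s i) :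
    isOne k s t p = false := by
  rw [isOne, decide_eq_false_iff_not]
  rintro ⟨j, hjk, hj1, hj2⟩
  rcases le_or_gt (j + 1) i with hji | hij
  · have : cum s t (j + 1) ≤ cum s t i := cum_mono s t hji
    rw [cum_succ] at this
    omega
  · -- i ≤ j
    have hij' : i ≤ j := by omega
    rcases eq_or_lt_of_le hij' with rfl | hij''
    · omega
    · have : cum s t (i + 1) ≤ cum s t j := cum_mono s t hij''
      rw [cum_succ] at this
      omega

/-- The basic null vector: `e_{cum i} - e_{cum i + 1 + j}`. -/
noncomputable def gvec (k : ℕ) (i j : ℕ) : Fin (cum s t k) → ℝ :=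
  fun p => (if p.val = cum s t i then (1 : ℝ) else 0)
    - (if p.val = cum s t i + 1 + j then (1 : ℝ) else 0)

lemma lt_total {k i j : ℕ} (hik : i < k) (hj : 1 + j < s i) :
    cum s t i + 1 + j < cum s t k := by
  have h1 : cum s t (i + 1) ≤ cum s t k := cum_mono s t hik
  rw [cum_succ] at h1
  omega

/-- indicator as `Pi.single`. -/
lemma indicator_eq_single {n a : ℕ} (ha : a < n) :
    (fun p : Fin n => if p.val = a then (1 : ℝ) else 0) = Pi.single ⟨a, ha⟩ (1 : ℝ) := by
  funext p
  rw [Pi.single_apply]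
  congr 1
  simp [Fin.ext_iff]

lemma adj_eq {k : ℕ} (hik : ∀ _i _j : ℕ, True) {i : ℕ} (hi : i < k)
    {a b : Fin (cum s t k)} (haL : cum s t i ≤ a.val) (haR : a.val < cum s t i + s i)
    (hbL : cum s t i ≤ b.val) (hbR : b.val < cum s t i + s i)
    (r : Fin (cum s t k)) :
    (TG k s t).Adj r a ↔ (TG k s t).Adj r b := by
  have key : ∀ x : Fin (cum s t k), cum s t i ≤ x.val → x.val < cum s t i + s i →
      ((TG k s t).Adj r x ↔ (cum s t i + s i ≤ r.val ∧ r ≠ x ∧ isOne k s t r.val = true)) := by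
    intro x hxL hxR
    constructor
    · rintro ⟨hne, hone⟩
      have hone' : isOne k s t (max r.val x.val) = true := hone
      rcases lt_or_ge r.val (cum s t i + s i) with hr | hr
      · exfalso
        have h1 : cum s t i ≤ max r.val x.val := le_trans hxL (le_max_right _ _)
        have h2 : max r.val x.val < cum s t i + s i := max_lt hr hxR
        have := isOne_false s t hi h1 h2
        rw [this] at hone'
        exact Bool.false_ne_true hone'
      · refine ⟨hr, hne, ?_⟩
        have hxr : x.val ≤ r.val := le_trans (le_of_lt hxR) hr
        have h3 : max r.val x.val = r.val := max_eq_left hxr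
        rw [h3] at hone'
        exact hone'
    · rintro ⟨hr, hne, hone⟩
      refine ⟨hne, ?_⟩
      have hxr : x.val ≤ r.val := le_trans (le_of_lt hxR) hr
      show isOne k s t (max r x).val = true
      have h3 : (max r x).val = r.val := max_eq_left hxr
      rw [h3]
      exact hone
  rw [key a haL haR, key b hbL hbR]
  constructor
  · rintro ⟨h1, _h2, h3⟩
    refine ⟨h1, ?_, h3⟩
    intro hrb; rw [hrb] at h1; omega
  · rintro ⟨h1, _h2, h3⟩
    refine ⟨h1, ?_, h3⟩
    intro hra; rw [hra] at h1; omega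

/-- The null vector property for the adjacency matrix. -/
lemma adjMatrix_mulVec_gvec {k i j : ℕ} (hik : i < k) (hj : 1 + j < s i) :
    ((TG k s t).adjMatrix ℝ).mulVec (gvec s t k i j) = 0 := by
  have ha : cum s t i < cum s t k := by
    have := lt_total s t hik hj; omega
  have hb : cum s t i + 1 + j < cum s t k := lt_total s t hik hj
  set A : Fin (cum s t k) := ⟨cum s t i, ha⟩
  set B : Fin (cum s t k) := ⟨cum s t i + 1 + j, hb⟩
  have hgv : gvec s t k i j = Pi.single A (1 : ℝ) - Pi.single B (1 : ℝ) := by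
    funext p
    simp only [gvec, Pi.sub_apply]
    rw [congrFun (indicator_eq_single ha) p, congrFun (indicator_eq_single hb) p]
  rw [hgv, Matrix.mulVec_sub, Matrix.mulVec_single, Matrix.mulVec_single]
  funext r
  have hadj : (TG k s t).Adj r A ↔ (TG k s t).Adj r B := by
    refine adj_eq s t (fun _ _ => trivial) hik ?_ ?_ ?_ ?_ r
    · exact le_refl _
    · show cum s t i < cum s t i + s i
      omega
    · show cum s t i ≤ cum s t i + 1 + j; omega
    · show cum s t i + 1 + j < cum s t i + s i; omega
  simp only [Pi.sub_apply, Pi.zero_apply, mul_one, MulOpposite.op_one, one_smul, Matrix.col_apply]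
  rw [SimpleGraph.adjMatrix_apply, SimpleGraph.adjMatrix_apply]
  by_cases h : (TG k s t).Adj r A
  · rw [if_pos h, if_pos (hadj.mp h), sub_self]
  · rw [if_neg h, if_neg (fun hb' => h (hadj.mpr hb')), sub_self]

/-- The null vector property for the normalized adjacency matrix. -/
lemma NA_mulVec_gvec {k i j : ℕ} (hik : i < k) (hj : 1 + j < s i) :
    (NA (TG k s t)).mulVec (gvec s t k i j) = 0 := by
  rw [NA, ← Matrix.mulVec_mulVec, adjMatrix_mulVec_gvec s t hik hj, Matrix.mulVec_zero]

/-- Evaluation of `gvec` at the distinguished point of another pair. -/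
lemma gvec_eval {k i j i' j' : ℕ} (hik : i < k) (hj : 1 + j < s i)
    (hik' : i' < k) (hj' : 1 + j' < s i') (p : Fin (cum s t k))
    (hp : p.val = cum s t i' + 1 + j') :
    gvec s t k i j p = if i = i' ∧ j = j' then -1 else 0 := by
  have hcum : ∀ m : ℕ, cum s t i' + 1 + j' ≠ cum s t m := by
    intro m hm
    rcases le_or_gt m i' with h | h
    · have := cum_mono s t h; omega
    · have h1 : cum s t (i' + 1) ≤ cum s t m := cum_mono s t h
      rw [cum_succ] at h1
      omega
  have hfirst : p.val ≠ cum s t i := by rw [hp]; exact hcum i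
  simp only [gvec, if_neg hfirst, zero_sub]
  by_cases hij : i = i' ∧ j = j'
  · obtain ⟨rfl, rfl⟩ := hij
    rw [if_pos hp, if_pos ⟨rfl, rfl⟩]
  · have hsecond : p.val ≠ cum s t i + 1 + j := by
      rw [hp]
      intro heq
      apply hij
      have hii : i = i' := by
        by_contra hne
        rcases lt_or_gt_of_ne hne with h | h
        · have h1 : cum s t (i + 1) ≤ cum s t i' := cum_mono s t h
          rw [cum_succ] at h1
          omega
        · have h1 : cum s t (i' + 1) ≤ cum s t i := cum_mono s t h
          rw [cum_succ] at h1
          omega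
      subst hii
      exact ⟨rfl, by omega⟩
    rw [if_neg hij, if_neg hsecond, neg_zero]

/-- Support of `gvec` is inside the cell. -/
lemma gvec_support {k i j : ℕ} (hj : 1 + j < s i) (p : Fin (cum s t k))
    (hp : p.val < cum s t i ∨ cum s t i + s i ≤ p.val) :
    gvec s t k i j p = 0 := by
  have h1 : p.val ≠ cum s t i := by omega
  have h2 : p.val ≠ cum s t i + 1 + j := by omega
  simp [gvec, h1, h2]

/-- Global linear independence of the family of null vectors. -/
lemma gvec_li {k : ℕ} (hs : ∀ i < k, 1 ≤ s i) :
    LinearIndependent ℝ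
      (fun x : (i : Fin k) × Fin (s i.val - 1) => gvec s t k x.1.val x.2.val) := by
  rw [Fintype.linearIndependent_iff]
  intro c hc x
  obtain ⟨i, j⟩ := x
  have hj : 1 + j.val < s i.val := by
    have := j.isLt; have := hs i.val i.isLt; omega
  have hpt : cum s t i.val + 1 + j.val < cum s t k := lt_total s t i.isLt hj
  have := congrFun hc ⟨cum s t i.val + 1 + j.val, hpt⟩
  simp only [Finset.sum_apply, Pi.smul_apply, smul_eq_mul, Pi.zero_apply] at this
  rw [Finset.sum_eq_single (⟨i, j⟩ : (i : Fin k) × Fin (s i.val - 1))] at this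
  · rw [gvec_eval s t i.isLt hj i.isLt hj _ rfl, if_pos ⟨rfl, rfl⟩] at this
    linarith
  · rintro ⟨i', j'⟩ _ hne
    have hj' : 1 + j'.val < s i'.val := by
      have := j'.isLt; have := hs i'.val i'.isLt; omega
    rw [gvec_eval s t i'.isLt hj' i.isLt hj _ rfl]
    rw [if_neg ?_, mul_zero]
    rintro ⟨h1, h2⟩
    apply hne
    have : i' = i := Fin.ext h1
    subst this
    have : j' = j := Fin.ext h2
    subst this
    rfl
  · intro h; exact absurd (Finset.mem_univ _) h

end ThresholdAux

open ThresholdAux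

/-- For a connected threshold graph `0^{s₁}1^{t₁}⋯0^{s_k}1^{t_k}`
with `s = Σsᵢ`, the eigenvalue `0` of the normalized adjacency matrix has
multiplicity at least `s - k`; explicitly, for each `i` with `sᵢ ≥ 2` there are
`sᵢ - 1` linearly independent null eigenvectors supported on the cell of
isolated-type vertices added at stage `i` (positions `[cum i, cum i + sᵢ)`). -/
theorem threshold_zero_multiplicity (k : ℕ) (s t : ℕ → ℕ) (hk : 1 ≤ k)
    (hs : ∀ i < k, 1 ≤ s i) (ht : ∀ i < k, 1 ≤ t i) :
    let M := NA (TG k s t)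
    (∑ i ∈ Finset.range k, s i) - k ≤ M.charpoly.roots.count 0 ∧
    ∀ i < k, 2 ≤ s i →
      ∃ f : Fin (s i - 1) → (Fin (cum s t k) → ℝ),
        LinearIndependent ℝ f ∧
        ∀ j, M.mulVec (f j) = 0 ∧
          ∀ p : Fin (cum s t k),
            (p.val < cum s t i ∨ cum s t i + s i ≤ p.val) → f j p = 0 := by
  intro M
  constructor
  · -- multiplicity bound
    set φ : Module.End ℝ (Fin (cum s t k) → ℝ) := Matrix.toLin' M with hφ
    have hchar : φ.charpoly = M.charpoly := by
      have h0 : (LinearMap.toMatrix (Pi.basisFun ℝ (Fin (cum s t k)))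
          (Pi.basisFun ℝ (Fin (cum s t k))) φ) = M := LinearMap.toMatrix'_toLin' M
      rw [← LinearMap.charpoly_toMatrix φ (Pi.basisFun ℝ (Fin (cum s t k))), h0]
    -- the kernel contains a linearly independent family of size ∑ sᵢ - k
    have hker : ∀ x : (i : Fin k) × Fin (s i.val - 1),
        gvec s t k x.1.val x.2.val ∈ LinearMap.ker φ := by
      rintro ⟨i, j⟩
      have hj : 1 + j.val < s i.val := by
        have := j.isLt; have := hs i.val i.isLt; omega
      rw [LinearMap.mem_ker, hφ, Matrix.toLin'_apply]
      exact NA_mulVec_gvec s t i.isLt hj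
    have hli : LinearIndependent ℝ
        (fun x : (i : Fin k) × Fin (s i.val - 1) =>
          (⟨gvec s t k x.1.val x.2.val, hker x⟩ : LinearMap.ker φ)) := by
      apply LinearIndependent.of_comp (LinearMap.ker φ).subtype
      exact gvec_li s t hs
    have hcard : Fintype.card ((i : Fin k) × Fin (s i.val - 1))
        = (∑ i ∈ Finset.range k, s i) - k := by
      rw [Fintype.card_sigma]
      simp only [Fintype.card_fin]
      rw [Fin.sum_univ_eq_sum_range (fun i => s i - 1)]
      rw [Finset.sum_tsub_distrib _ (fun x hx => hs x (Finset.mem_range.mp hx))]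
      simp
    have h1 : (∑ i ∈ Finset.range k, s i) - k ≤
        Module.finrank ℝ (LinearMap.ker φ) := by
      rw [← hcard]
      exact hli.fintype_card_le_finrank
    have h2 : LinearMap.ker φ ≤ φ.maxGenEigenspace 0 := by
      intro x hx
      rw [Module.End.mem_maxGenEigenspace]
      exact ⟨1, by simpa using hx⟩
    have h3 : Module.finrank ℝ (LinearMap.ker φ)
        ≤ Module.finrank ℝ (φ.maxGenEigenspace 0) :=
      Submodule.finrank_mono h2
    rw [Polynomial.count_roots, Polynomial.rootMultiplicity_eq_natTrailingDegree',
      ← hchar, ← LinearMap.finrank_maxGenEigenspace_zero_eq]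
    exact le_trans h1 h3
  · -- explicit eigenvectors
    intro i hik hsi
    refine ⟨fun j => gvec s t k i j.val, ?_, ?_⟩
    · have : LinearIndependent ℝ
          (fun x : (i : Fin k) × Fin (s i.val - 1) => gvec s t k x.1.val x.2.val) :=
        gvec_li s t hs
      have := this.comp (fun j : Fin (s i - 1) => (⟨⟨i, hik⟩, j⟩ : (i : Fin k) × Fin (s i.val - 1)))
        (fun a b hab => by
          simpa using (Sigma.mk.inj_iff.mp hab).2.eq)
      exact this
    · intro j
      have hj : 1 + j.val < s i := by have := j.isLt; omega
      refine ⟨NA_mulVec_gvec s t hik hj, ?_⟩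
      intro p hp
      exact gvec_support s t hj p hp
end

section
/- For a connected threshold graph with string 0^{s₁}1^{t₁}⋯0^{s_k}1^{t_k} and natural equitable partition π into 2k cells, det(B_π) = (−1)^k s₁t₁s₂t₂⋯s_k t_k, and consequently det(ℬ_π) = (−1)^k r₁r₂⋯r_{2k} where rᵢ = |Cᵢ|/d(Cᵢ). -/
open Matrix Polynomial BigOperators Finset

/-- The quotient matrix `B_π` of the natural equitable partition of the threshold
graph `0^{s₁}1^{t₁}⋯0^{s_k}1^{t_k}` into `2k` cells. Cells are 0-indexed:
cell `2i` is the `sᵢ` isolated-type vertices of stage `i`, cell `2i+1` the `tᵢ`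
dominating-type vertices of stage `i`. -/
def Bq (k : ℕ) (s t : ℕ → ℕ) : Matrix (Fin (2 * k)) (Fin (2 * k)) ℝ :=
  fun i j =>
    if i.val % 2 = 0 then
      (if j.val % 2 = 1 ∧ i.val / 2 ≤ j.val / 2 then (t (j.val / 2) : ℝ) else 0)
    else
      if j < i then (if j.val % 2 = 0 then (s (j.val / 2) : ℝ) else (t (j.val / 2) : ℝ))
      else if j = i then (t (i.val / 2) : ℝ) - 1
      else if j.val % 2 = 1 then (t (j.val / 2) : ℝ) else 0

/-- The common degree `d(Cᵢ)` of the vertices in cell `i`, i.e. the `i`-th row sum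
of `B_π`. -/
noncomputable def dq (k : ℕ) (s t : ℕ → ℕ) (i : Fin (2 * k)) : ℝ := ∑ j, Bq k s t i j

/-- The normalized quotient matrix `ℬ_π = D_π⁻¹ B_π`. -/
noncomputable def Bcal (k : ℕ) (s t : ℕ → ℕ) : Matrix (Fin (2 * k)) (Fin (2 * k)) ℝ :=
  Matrix.diagonal (fun i => (dq k s t i)⁻¹) * Bq k s t

noncomputable def Em (n : ℕ) : Matrix (Fin n) (Fin n) ℝ :=
  fun i l => (if l = i then 1 else 0) +
    (if ((i:ℕ) % 2 = 0 ∧ (l:ℕ) = (i:ℕ) + 2) ∨ ((i:ℕ) % 2 = 1 ∧ (l:ℕ) + 2 = (i:ℕ))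
     then (-1:ℝ) else 0)

noncomputable def Mm (k : ℕ) (s t : ℕ → ℕ) : Matrix (Fin (2*k)) (Fin (2*k)) ℝ :=
  fun i j =>
    if (i:ℕ) % 2 = 0 then (if (j:ℕ) = (i:ℕ)+1 then (t ((i:ℕ)/2) : ℝ) else 0)
    else if (i:ℕ) = 1 then
      (if (j:ℕ) = 0 then (s 0:ℝ) else if (j:ℕ) = 1 then (t 0:ℝ) - 1
       else if (j:ℕ) % 2 = 1 then (t ((j:ℕ)/2):ℝ) else 0)
    else (if (j:ℕ)+2 = (i:ℕ) then 1 else if (j:ℕ)+1 = (i:ℕ) then (s ((i:ℕ)/2):ℝ)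
          else if (j:ℕ) = (i:ℕ) then -1 else 0)

noncomputable def nv (k : ℕ) (s t : ℕ → ℕ) : Matrix (Fin (2*k)) (Fin (2*k)) ℝ :=
  fun l j =>
    if (l:ℕ) % 2 = 0 ∧ (j:ℕ) % 2 = 1 then
      (if (l:ℕ) = 0 then -(if (j:ℕ) = 1 then (t 0:ℝ) - 1 else (t ((j:ℕ)/2):ℝ))/(s 0:ℝ)
       else if (j:ℕ)+1 = (l:ℕ) then -1/(s ((l:ℕ)/2):ℝ)
       else if (j:ℕ) = (l:ℕ)+1 then 1/(s ((l:ℕ)/2):ℝ) else 0)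
    else 0

noncomputable def Vm (k : ℕ) (s t : ℕ → ℕ) : Matrix (Fin (2*k)) (Fin (2*k)) ℝ :=
  fun l j => (if j = l then 1 else 0) + nv k s t l j

noncomputable def M2m (k : ℕ) (s t : ℕ → ℕ) : Matrix (Fin (2*k)) (Fin (2*k)) ℝ :=
  fun i j => if (i:ℕ)/2 = (j:ℕ)/2 then
    (if (i:ℕ)%2 = 0 ∧ (j:ℕ)%2 = 1 then (t ((i:ℕ)/2):ℝ)
     else if (i:ℕ)%2 = 1 ∧ (j:ℕ)%2 = 0 then (s ((i:ℕ)/2):ℝ) else 0) else 0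

def pe (k : ℕ) : Fin (2*k) ≃ Fin (2*k) where
  toFun i := ⟨if (i:ℕ) < k then 2*(i:ℕ) else 2*(2*k-1-(i:ℕ))+1, by split_ifs <;> omega⟩
  invFun p := ⟨if (p:ℕ) % 2 = 0 then (p:ℕ)/2 else 2*k-1-(p:ℕ)/2, by split_ifs <;> omega⟩
  left_inv i := by
    apply Fin.ext; have := i.isLt
    simp only [Fin.val_mk]; split_ifs <;> omega
  right_inv p := by
    apply Fin.ext; have := p.isLt
    simp only [Fin.val_mk]; split_ifs <;> omega

lemma pe_val (k : ℕ) (i : Fin (2*k)) :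
    ((pe k i : Fin (2*k)) : ℕ) = if (i:ℕ) < k then 2*(i:ℕ) else 2*(2*k-1-(i:ℕ))+1 := rfl

def phi (k : ℕ) : Fin (2*k) ≃ Fin 2 × Fin k where
  toFun i := (⟨(i:ℕ) % 2, by omega⟩, ⟨(i:ℕ)/2, by have := i.isLt; omega⟩)
  invFun p := ⟨2*(p.2:ℕ) + (p.1:ℕ), by have := p.1.isLt; have := p.2.isLt; omega⟩
  left_inv i := by apply Fin.ext; simp only [Fin.val_mk]; omega
  right_inv p := by
    have h1 := p.1.isLt; have h2 := p.2.isLt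
    ext <;> simp only [Fin.val_mk] <;> omega

lemma sum_ite_val {n : ℕ} (c : ℕ) (x : Fin n → ℝ) :
    ∑ l : Fin n, (if (l:ℕ) = c then x l else 0) = if h : c < n then x ⟨c, h⟩ else 0 := by
  split_ifs with h
  · rw [Finset.sum_eq_single (⟨c, h⟩ : Fin n)]
    · simp
    · intro b _ hb
      rw [if_neg]
      intro hc; exact hb (Fin.ext hc)
    · simp
  · apply Finset.sum_eq_zero
    intro l _
    rw [if_neg]
    intro hc; exact h (hc ▸ l.isLt)

lemma EB (k : ℕ) (s t : ℕ → ℕ) : Em (2*k) * Bq k s t = Mm k s t := by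
  ext i j
  rw [Matrix.mul_apply]
  have expand : ∀ l : Fin (2*k), Em (2*k) i l * Bq k s t l j =
      (if l = i then Bq k s t l j else 0) +
      (if ((i:ℕ) % 2 = 0 ∧ (l:ℕ) = (i:ℕ) + 2) ∨ ((i:ℕ) % 2 = 1 ∧ (l:ℕ) + 2 = (i:ℕ))
       then -Bq k s t l j else 0) := by
    intro l
    unfold Em
    rw [add_mul]
    congr 1 <;> split_ifs <;> ring
  rw [Finset.sum_congr rfl (fun l _ => expand l), Finset.sum_add_distrib]
  rw [Finset.sum_ite_eq' Finset.univ i, if_pos (Finset.mem_univ i)]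
  have hi2 := i.isLt
  have hj2 := j.isLt
  by_cases hi : (i:ℕ) % 2 = 0
  · -- even row
    have hcong : ∀ l : Fin (2*k),
        (if ((i:ℕ) % 2 = 0 ∧ (l:ℕ) = (i:ℕ) + 2) ∨ ((i:ℕ) % 2 = 1 ∧ (l:ℕ) + 2 = (i:ℕ))
         then -Bq k s t l j else 0) = (if (l:ℕ) = (i:ℕ)+2 then -Bq k s t l j else 0) := by
      intro l; apply if_congr _ rfl rfl; constructor
      · rintro (⟨_, h⟩ | ⟨h1, _⟩); exact h; omega
      · intro h; left; exact ⟨hi, h⟩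
    rw [Finset.sum_congr rfl (fun l _ => hcong l), sum_ite_val]
    by_cases hb : (i:ℕ) + 2 < 2*k
    · rw [dif_pos hb]
      show Bq k s t i j + -Bq k s t ⟨(i:ℕ)+2, hb⟩ j = Mm k s t i j
      simp only [Bq, Mm, Fin.lt_def, Fin.ext_iff, Fin.val_mk]
      split_ifs <;>
        first
          | ring1
          | omega
          | (exfalso; omega)
          | ((have hd : ((j:ℕ))/2 = ((i:ℕ))/2 := by omega); rw [hd]; try ring1)
    · rw [dif_neg hb]
      rw [add_zero]
      simp only [Bq, Mm, Fin.lt_def, Fin.ext_iff, Fin.val_mk]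
      split_ifs <;>
        first
          | ring1
          | omega
          | (exfalso; omega)
          | ((have hd : ((j:ℕ))/2 = ((i:ℕ))/2 := by omega); rw [hd]; try ring1)
  · -- odd row
    have hcong : ∀ l : Fin (2*k),
        (if ((i:ℕ) % 2 = 0 ∧ (l:ℕ) = (i:ℕ) + 2) ∨ ((i:ℕ) % 2 = 1 ∧ (l:ℕ) + 2 = (i:ℕ))
         then -Bq k s t l j else 0) = (if (l:ℕ) + 2 = (i:ℕ) then -Bq k s t l j else 0) := by
      intro l; apply if_congr _ rfl rfl; constructor
      · rintro (⟨h1, _⟩ | ⟨_, h⟩); omega; exact h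
      · intro h; right; exact ⟨by omega, h⟩
    rw [Finset.sum_congr rfl (fun l _ => hcong l)]
    by_cases h1 : (i:ℕ) = 1
    · rw [Finset.sum_eq_zero (fun l _ => by rw [if_neg]; omega), add_zero]
      simp only [Bq, Mm, Fin.lt_def, Fin.ext_iff, Fin.val_mk]
      split_ifs <;>
        first
          | ring1
          | omega
          | (exfalso; omega)
          | ((have hd : (j:ℕ)/2 = 0 := by omega); rw [hd]; try ring1)
          | ((have hd : (i:ℕ)/2 = 0 := by omega); rw [hd]; try ring1)
    · -- i odd, i ≥ 3
      have h3 : 2 ≤ (i:ℕ) := by omega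
      have hcong2 : ∀ l : Fin (2*k),
          (if (l:ℕ) + 2 = (i:ℕ) then -Bq k s t l j else 0)
            = (if (l:ℕ) = (i:ℕ) - 2 then -Bq k s t l j else 0) := by
        intro l; apply if_congr (by omega) rfl rfl
      rw [Finset.sum_congr rfl (fun l _ => hcong2 l), sum_ite_val,
        dif_pos (by omega : (i:ℕ) - 2 < 2*k)]
      simp only [Bq, Mm, Fin.lt_def, Fin.ext_iff, Fin.val_mk]
      split_ifs <;>
        first
          | ring1
          | omega
          | (exfalso; omega)
          | ((have hd : ((j:ℕ))/2 = ((i:ℕ))/2 := by omega); rw [hd]; try ring1)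
          | ((have hd : ((j:ℕ))/2 = (((i:ℕ)-2))/2 := by omega); rw [hd]; try ring1)
          | ((have hd : (((i:ℕ)-2))/2 = ((j:ℕ))/2 := by omega); rw [hd]; try ring1)

lemma MV (k : ℕ) (s t : ℕ → ℕ) (hs : ∀ i < k, 1 ≤ s i) :
    Mm k s t * Vm k s t = M2m k s t := by
  ext i j
  rw [Matrix.mul_apply]
  have expand : ∀ l : Fin (2*k), Mm k s t i l * Vm k s t l j =
      (if j = l then Mm k s t i l else 0) + Mm k s t i l * nv k s t l j := by
    intro l
    unfold Vm
    rw [mul_add, mul_ite, mul_one, mul_zero]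
  rw [Finset.sum_congr rfl (fun l _ => expand l), Finset.sum_add_distrib,
    Finset.sum_ite_eq Finset.univ j, if_pos (Finset.mem_univ j)]
  have hi2 := i.isLt
  have hj2 := j.isLt
  by_cases hi : (i:ℕ) % 2 = 0
  · -- even row: second sum is zero
    rw [Finset.sum_eq_zero, add_zero]
    · simp only [Mm, M2m]
      rw [if_pos hi]
      split_ifs <;> first | rfl | omega | (exfalso; omega)
    · intro l _
      by_cases hc : (l:ℕ) % 2 = 0 ∧ (j:ℕ) % 2 = 1
      · have : Mm k s t i l = 0 := by
          simp only [Mm, if_pos hi]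
          rw [if_neg]; omega
        rw [this, zero_mul]
      · simp only [nv, if_neg hc, mul_zero]
  · -- odd row
    have hl0 : (i:ℕ) - 1 < 2*k := by omega
    have hsne : (s ((i:ℕ)/2) : ℝ) ≠ 0 := by
      have := hs ((i:ℕ)/2) (by omega)
      positivity
    have hsum : ∑ l : Fin (2*k), Mm k s t i l * nv k s t l j
        = (s ((i:ℕ)/2) : ℝ) * nv k s t ⟨(i:ℕ)-1, hl0⟩ j := by
      rw [Finset.sum_eq_single (⟨(i:ℕ)-1, hl0⟩ : Fin (2*k))]
      · congr 1
        simp only [Mm, if_neg hi, Fin.val_mk]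
        split_ifs <;> first | rfl | omega | (exfalso; omega) |
          ((have hd : (i:ℕ)/2 = 0 := by omega); rw [hd])
      · intro l _ hl
        have hlv : (l:ℕ) ≠ (i:ℕ) - 1 := fun h => hl (Fin.ext h)
        by_cases hc : (l:ℕ) % 2 = 0 ∧ (j:ℕ) % 2 = 1
        · have : Mm k s t i l = 0 := by
            simp only [Mm, if_neg hi]
            split_ifs <;> first | rfl | omega | (exfalso; omega)
          rw [this, zero_mul]
        · simp only [nv, if_neg hc, mul_zero]
      · simp
    rw [hsum]
    by_cases hj : (j:ℕ) % 2 = 1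
    · -- j odd: RHS is 0
      have hM2 : M2m k s t i j = 0 := by
        simp only [M2m]
        split_ifs <;> first | rfl | (exfalso; omega)
      rw [hM2]
      have hd : ((i:ℕ)-1)/2 = (i:ℕ)/2 := by omega
      by_cases h1 : (i:ℕ) = 1
      · have hs0 : (s 0 : ℝ) ≠ 0 := by
          have := hs 0 (by omega); positivity
        have hd0 : (i:ℕ)/2 = 0 := by omega
        have hnv : nv k s t ⟨(i:ℕ)-1, hl0⟩ j
            = -(if (j:ℕ) = 1 then (t 0:ℝ) - 1 else (t ((j:ℕ)/2):ℝ))/(s 0:ℝ) := by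
          simp only [nv, Fin.val_mk]
          rw [if_pos ⟨(by omega : ((i:ℕ)-1) % 2 = 0), hj⟩, if_pos (by omega : (i:ℕ)-1 = 0)]
        rw [hnv]
        simp only [Mm]
        rw [if_neg hi, if_pos h1, hd0]
        split_ifs <;> (try (exfalso; omega)) <;> field_simp <;> ring1
      · have hnv : nv k s t ⟨(i:ℕ)-1, hl0⟩ j
            = (if (j:ℕ)+2 = (i:ℕ) then -1/(s ((i:ℕ)/2):ℝ)
               else if (j:ℕ) = (i:ℕ) then 1/(s ((i:ℕ)/2):ℝ) else 0) := by
          simp only [nv, Fin.val_mk]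
          rw [if_pos ⟨(by omega : ((i:ℕ)-1) % 2 = 0), hj⟩, if_neg (by omega : ¬ (i:ℕ)-1 = 0), hd]
          exact if_congr (by omega) rfl (if_congr (by omega) rfl rfl)
        rw [hnv]
        simp only [Mm]
        rw [if_neg hi, if_neg h1]
        split_ifs <;> (try (exfalso; omega)) <;> field_simp <;> ring1
    · -- j even: nv term vanishes
      have hnv : nv k s t ⟨(i:ℕ)-1, hl0⟩ j = 0 := by
        simp only [nv]
        rw [if_neg]; omega
      rw [hnv, mul_zero, add_zero]
      simp only [Mm, M2m]
      rw [if_neg hi]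
      split_ifs <;>
        first
          | rfl
          | omega
          | (exfalso; omega)
          | ((have hd0 : (i:ℕ)/2 = 0 := by omega); rw [hd0])

lemma det_Em (k : ℕ) : (Em (2*k)).det = 1 := by
  rw [← Matrix.det_submatrix_equiv_self (pe k)]
  have ht : ((Em (2*k)).submatrix (pe k) (pe k)).BlockTriangular id := by
    intro i j hij
    simp only [Matrix.submatrix_apply, Em]
    have hji : (pe k j) ≠ (pe k i) := fun h => absurd ((pe k).injective h) (ne_of_lt hij)
    rw [if_neg hji, if_neg, zero_add]
    have hi := i.isLt; have hj := j.isLt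
    have hij' : (j:ℕ) < (i:ℕ) := hij
    rw [pe_val, pe_val]
    split_ifs <;> omega
  rw [Matrix.det_of_upperTriangular ht]
  apply Finset.prod_eq_one
  intro i _
  show Em (2*k) (pe k i) (pe k i) = 1
  unfold Em
  rw [if_pos rfl, if_neg (by omega), add_zero]

lemma det_Vm (k : ℕ) (s t : ℕ → ℕ) : (Vm k s t).det = 1 := by
  rw [← Matrix.det_submatrix_equiv_self (pe k)]
  have ht : ((Vm k s t).submatrix (pe k) (pe k)).BlockTriangular id := by
    intro i j hij
    simp only [Matrix.submatrix_apply, Vm]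
    have hji : (pe k j) ≠ (pe k i) := fun h => absurd ((pe k).injective h) (ne_of_lt hij)
    rw [if_neg hji, zero_add]
    have hi := i.isLt; have hj := j.isLt
    have hij' : (j:ℕ) < (i:ℕ) := hij
    unfold nv
    rw [if_neg]
    rw [pe_val, pe_val]
    split_ifs <;> omega
  rw [Matrix.det_of_upperTriangular ht]
  apply Finset.prod_eq_one
  intro i _
  show Vm k s t (pe k i) (pe k i) = 1
  unfold Vm nv
  rw [if_pos rfl, if_neg (by omega), add_zero]

lemma detM2 (k : ℕ) (s t : ℕ → ℕ) :
    (M2m k s t).det = (-1:ℝ)^k * ∏ i ∈ Finset.range k, ((s i : ℝ) * (t i : ℝ)) := by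
  have heq : M2m k s t =
      (Matrix.blockDiagonal (fun c : Fin k => !![(0:ℝ), (t (c:ℕ):ℝ); (s (c:ℕ):ℝ), 0])).submatrix
        (phi k) (phi k) := by
    ext i j
    have hi2 := i.isLt
    have hj2 := j.isLt
    simp only [Matrix.submatrix_apply, phi, Equiv.coe_fn_mk, Matrix.blockDiagonal_apply]
    by_cases hd : (i:ℕ)/2 = (j:ℕ)/2
    · rw [if_pos (Fin.ext hd : (⟨(i:ℕ)/2, _⟩ : Fin k) = ⟨(j:ℕ)/2, _⟩)]
      simp only [M2m, if_pos hd]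
      have hia : (i:ℕ) % 2 = 0 ∨ (i:ℕ) % 2 = 1 := by omega
      have hja : (j:ℕ) % 2 = 0 ∨ (j:ℕ) % 2 = 1 := by omega
      rcases hia with hi | hi <;> rcases hja with hjp | hjp <;>
        simp [hi, hjp, hd]
    · rw [if_neg (fun h => hd (congrArg Fin.val h)), M2m, if_neg hd]
  rw [heq, Matrix.det_submatrix_equiv_self, Matrix.det_blockDiagonal]
  have : ∀ c : Fin k, (!![(0:ℝ), (t (c:ℕ):ℝ); (s (c:ℕ):ℝ), 0]).det
      = -1 * ((s (c:ℕ):ℝ) * (t (c:ℕ):ℝ)) := by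
    intro c; rw [Matrix.det_fin_two_of]; ring
  rw [Finset.prod_congr rfl (fun c _ => this c), Finset.prod_mul_distrib,
    Finset.prod_const, ← Fin.prod_univ_eq_prod_range (fun i => ((s i:ℝ) * (t i:ℝ)))]
  simp [Finset.card_univ]

lemma prod_sizes (k : ℕ) (s t : ℕ → ℕ) :
    (∏ j : Fin (2*k), (if (j:ℕ) % 2 = 0 then (s ((j:ℕ)/2) : ℝ) else (t ((j:ℕ)/2) : ℝ)))
      = ∏ i ∈ Finset.range k, ((s i : ℝ) * (t i : ℝ)) := by
  have key : ∀ g : ℕ → ℝ, ∏ j : Fin (2*k), g (j:ℕ)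
      = (∏ c : Fin k, g (2*(c:ℕ))) * ∏ c : Fin k, g (2*(c:ℕ)+1) := by
    intro g
    rw [← Equiv.prod_comp ((phi k).symm) (fun j : Fin (2*k) => g (j:ℕ))]
    have hv : ∀ p : Fin 2 × Fin k, g ((((phi k).symm p) : Fin (2*k)) : ℕ)
        = g (2*(p.2:ℕ) + (p.1:ℕ)) := fun p => rfl
    rw [Finset.prod_congr rfl (fun p _ => hv p), Fintype.prod_prod_type]
    rw [Fin.prod_univ_two (fun a : Fin 2 => ∏ c : Fin k, g (2*(c:ℕ) + (a:ℕ)))]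
    norm_num
  rw [key (fun m => if m % 2 = 0 then (s (m/2) : ℝ) else (t (m/2) : ℝ))]
  have h0 : ∀ c : Fin k,
      (if (2*(c:ℕ)) % 2 = 0 then (s ((2*(c:ℕ))/2) : ℝ) else (t ((2*(c:ℕ))/2) : ℝ)) = (s (c:ℕ) : ℝ) := by
    intro c
    rw [if_pos (by omega)]
    have hd : (2*(c:ℕ))/2 = (c:ℕ) := by omega
    rw [hd]
  have h1 : ∀ c : Fin k,
      (if (2*(c:ℕ)+1) % 2 = 0 then (s ((2*(c:ℕ)+1)/2) : ℝ) else (t ((2*(c:ℕ)+1)/2) : ℝ)) = (t (c:ℕ) : ℝ) := by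
    intro c
    rw [if_neg (by omega)]
    have hd : (2*(c:ℕ)+1)/2 = (c:ℕ) := by omega
    rw [hd]
  rw [Finset.prod_congr rfl (fun c _ => h0 c), Finset.prod_congr rfl (fun c _ => h1 c),
    ← Finset.prod_mul_distrib, ← Fin.prod_univ_eq_prod_range (fun i => ((s i:ℝ) * (t i:ℝ)))]

lemma detBq (k : ℕ) (s t : ℕ → ℕ)
    (hs : ∀ i < k, 1 ≤ s i) :
    (Bq k s t).det = (-1 : ℝ) ^ k * ∏ i ∈ Finset.range k, ((s i : ℝ) * (t i : ℝ)) := by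
  have h1 : (Mm k s t).det = (Bq k s t).det := by
    rw [← EB k s t, Matrix.det_mul, det_Em, one_mul]
  have h2 : (Mm k s t).det = (M2m k s t).det := by
    rw [← MV k s t hs, Matrix.det_mul, det_Vm, mul_one]
  rw [← h1, h2, detM2]

/-- For a connected threshold graph `0^{s₁}1^{t₁}⋯0^{s_k}1^{t_k}`
with natural equitable partition into `2k` cells, `det(B_π) = (-1)^k s₁t₁⋯s_k t_k`
and consequently `det(ℬ_π) = (-1)^k r₁⋯r_{2k}` where `rᵢ = |Cᵢ|/d(Cᵢ)`. -/
theorem threshold_quotient_det (k : ℕ) (s t : ℕ → ℕ) (hk : 1 ≤ k)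
    (hs : ∀ i < k, 1 ≤ s i) (ht : ∀ i < k, 1 ≤ t i) :
    (Bq k s t).det = (-1 : ℝ) ^ k * ∏ i ∈ Finset.range k, ((s i : ℝ) * (t i : ℝ)) ∧
    (Bcal k s t).det = (-1 : ℝ) ^ k *
      ∏ j : Fin (2 * k),
        ((if j.val % 2 = 0 then (s (j.val / 2) : ℝ) else (t (j.val / 2) : ℝ)) /
          dq k s t j) := by
  constructor
  · exact detBq k s t hs
  · unfold Bcal
    rw [Matrix.det_mul, Matrix.det_diagonal, detBq k s t hs]
    have hdiv : ∀ j : Fin (2*k),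
        ((if (j:ℕ) % 2 = 0 then (s ((j:ℕ)/2) : ℝ) else (t ((j:ℕ)/2) : ℝ)) / dq k s t j)
          = (if (j:ℕ) % 2 = 0 then (s ((j:ℕ)/2) : ℝ) else (t ((j:ℕ)/2) : ℝ)) * (dq k s t j)⁻¹ :=
      fun j => div_eq_mul_inv _ _
    have hr : (∏ j : Fin (2*k),
        ((if (j:ℕ) % 2 = 0 then (s ((j:ℕ)/2) : ℝ) else (t ((j:ℕ)/2) : ℝ)) / dq k s t j))
        = (∏ i ∈ Finset.range k, ((s i : ℝ) * (t i : ℝ))) * ∏ j : Fin (2*k), (dq k s t j)⁻¹ := by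
      rw [Finset.prod_congr rfl (fun j _ => hdiv j), Finset.prod_mul_distrib, prod_sizes]
    rw [hr]
    ring
end

section
/- Let Γ be a connected threshold graph with string 0^{s}1^{t}, s,t ≥ 2, and n = s + t. Then the eigenvalues of the normalized adjacency matrix are exactly 1, 0 with multiplicity s−1, −1/(n−1) with multiplicity t−1, and −(n−t)/(n−1). -/
open Matrix Polynomial BigOperators Finset

lemma sum_ite_fin' {M : Type*} [AddCommMonoid M] (s t : ℕ) (a b : M) :
    ∑ i : Fin (s + t), (if (i : ℕ) < s then a else b) = s • a + t • b := by
  rw [Fin.sum_univ_eq_sum_range (fun k => if k < s then a else b) (s + t),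
    Finset.sum_range_add]
  have h1 : ∀ k ∈ Finset.range s, (if k < s then a else b) = a := by
    intro k hk; simp [Finset.mem_range.mp hk]
  have h2 : ∀ k ∈ Finset.range t, (if s + k < s then a else b) = b := by
    intro k _; simp
  rw [Finset.sum_congr rfl h1, Finset.sum_congr rfl h2]
  simp

lemma sum_ite_fin (s t : ℕ) (a b : ℝ) :
    ∑ i : Fin (s + t), (if (i : ℕ) < s then a else b) = s * a + t * b := by
  rw [sum_ite_fin']; simp [nsmul_eq_mul]

lemma thr_adj_iff (s t : ℕ) (i j : Fin (s+t)) :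
    (thresholdGraph (s+t) (fun p => decide (s ≤ p.val))).Adj i j ↔
      i ≠ j ∧ (s ≤ (i:ℕ) ∨ s ≤ (j:ℕ)) := by
  have hmax : ((max i j : Fin (s+t)) : ℕ) = max (i:ℕ) (j:ℕ) := by
    rcases le_total i j with h | h
    · rw [max_eq_right h, max_eq_right (Fin.le_def.mp h)]
    · rw [max_eq_left h, max_eq_left (Fin.le_def.mp h)]
  show (i ≠ j ∧ decide (s ≤ ((max i j : Fin (s+t)) : ℕ)) = true) ↔ _
  rw [decide_eq_true_iff, hmax, le_max_iff]

lemma thr_deg (s t : ℕ) (i : Fin (s+t)) :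
    (thresholdGraph (s+t) (fun p => decide (s ≤ p.val))).degree i
      = if (i:ℕ) < s then t else s + t - 1 := by
  classical
  rw [SimpleGraph.degree, SimpleGraph.neighborFinset_eq_filter]
  by_cases his : (i:ℕ) < s
  · rw [if_pos his]
    have hf : (univ.filter fun j => (thresholdGraph (s+t) (fun p => decide (s ≤ p.val))).Adj i j)
        = univ.filter (fun j : Fin (s+t) => s ≤ (j:ℕ)) := by
      apply Finset.filter_congr
      intro j _
      rw [thr_adj_iff]
      constructor
      · rintro ⟨_, h | h⟩
        · omega
        · exact h
      · intro h
        refine ⟨fun he => ?_, Or.inr h⟩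
        subst he; omega
    rw [hf, Finset.card_filter]
    have : ∀ j : Fin (s+t), (if s ≤ (j:ℕ) then 1 else 0) = (if (j:ℕ) < s then 0 else 1) := by
      intro j; by_cases h : (j:ℕ) < s <;> simp [h] <;> omega
    rw [Finset.sum_congr rfl (fun j _ => this j), sum_ite_fin']
    simp
  · rw [if_neg his]
    have hf : (univ.filter fun j => (thresholdGraph (s+t) (fun p => decide (s ≤ p.val))).Adj i j)
        = univ.erase i := by
      ext j
      simp only [Finset.mem_filter, Finset.mem_univ, true_and, Finset.mem_erase]
      rw [thr_adj_iff]
      constructor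
      · rintro ⟨hne, _⟩; exact ⟨fun h => hne h.symm, trivial⟩
      · rintro ⟨hne, _⟩; exact ⟨fun h => hne h.symm, Or.inl (by omega)⟩
    rw [hf, Finset.card_erase_of_mem (Finset.mem_univ i), Finset.card_univ, Fintype.card_fin]

noncomputable def Mmat (s t : ℕ) : Matrix (Fin (s+t)) (Fin (s+t)) ℝ :=
  Matrix.of fun i j =>
    if (i:ℕ) < s then (if (j:ℕ) < s then 0 else (t:ℝ)⁻¹)
    else (if j = i then 0 else ((s:ℝ)+t-1)⁻¹)

lemma NA_eq (s t : ℕ) (hs : 2 ≤ s) (ht : 2 ≤ t) :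
    NA (thresholdGraph (s+t) (fun p => decide (s ≤ p.val))) = Mmat s t := by
  ext i j
  rw [NA, Matrix.diagonal_mul, SimpleGraph.adjMatrix_apply, thr_deg]
  by_cases his : (i:ℕ) < s
  · rw [if_pos his]
    by_cases hjs : (j:ℕ) < s
    · have : ¬ (thresholdGraph (s+t) (fun p => decide (s ≤ p.val))).Adj i j := by
        rw [thr_adj_iff]; rintro ⟨_, h | h⟩ <;> omega
      simp [Mmat, his, hjs, this]
    · have : (thresholdGraph (s+t) (fun p => decide (s ≤ p.val))).Adj i j := by
        rw [thr_adj_iff]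
        exact ⟨fun he => by subst he; omega, Or.inr (by omega)⟩
      simp [Mmat, his, hjs, this]
  · rw [if_neg his]
    by_cases hij : j = i
    · subst hij
      have : ¬ (thresholdGraph (s+t) (fun p => decide (s ≤ p.val))).Adj j j := by
        rw [thr_adj_iff]; rintro ⟨h, _⟩; exact h rfl
      simp [Mmat, his, this]
    · have : (thresholdGraph (s+t) (fun p => decide (s ≤ p.val))).Adj i j := by
        rw [thr_adj_iff]
        exact ⟨fun he => hij he.symm, Or.inl (by omega)⟩
      have hc : ((s + t - 1 : ℕ) : ℝ) = (s:ℝ) + t - 1 := by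
        push_cast [Nat.cast_sub (by omega : 1 ≤ s + t)]; ring
      simp [Mmat, his, hij, this, hc]

lemma prod_ite_fin (s t : ℕ) (a b : ℝ) :
    ∏ i : Fin (s + t), (if (i : ℕ) < s then a else b) = a ^ s * b ^ t := by
  rw [Fin.prod_univ_eq_prod_range (fun k => if k < s then a else b) (s + t),
    Finset.prod_range_add]
  have h1 : ∀ k ∈ Finset.range s, (if k < s then a else b) = a := by
    intro k hk; simp [Finset.mem_range.mp hk]
  have h2 : ∀ k ∈ Finset.range t, (if s + k < s then a else b) = b := by
    intro k _; simp
  rw [Finset.prod_congr rfl h1, Finset.prod_congr rfl h2]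
  simp

lemma evalCharpoly {n : ℕ} (M : Matrix (Fin n) (Fin n) ℝ) (x : ℝ) :
    (M.charpoly).eval x = (x • (1 : Matrix (Fin n) (Fin n) ℝ) - M).det := by
  have h : (Polynomial.evalRingHom x) M.charpoly
      = ((Polynomial.evalRingHom x).mapMatrix (Matrix.charmatrix M)).det := by
    rw [Matrix.charpoly, ← RingHom.map_det]
  simp only [coe_evalRingHom] at h
  rw [h]
  congr 1
  ext i j
  by_cases hij : i = j
  · subst hij; simp [Matrix.charmatrix_apply_eq, Matrix.one_apply]
  · simp [Matrix.charmatrix_apply_ne _ _ _ hij, Matrix.one_apply, hij]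

noncomputable def Umat (s t : ℕ) : Matrix (Fin (s+t)) (Fin 2) ℝ :=
  Matrix.of fun i k => if k = 0 then 1 else (if (i:ℕ) < s then 1 else 0)

noncomputable def Vmat (s t : ℕ) (c : ℝ) : Matrix (Fin 2) (Fin (s+t)) ℝ :=
  Matrix.of fun k j => if k = 0 then c else (if (j:ℕ) < s then -c else (t:ℝ)⁻¹ - c)

lemma key_alg (a b : ℕ) (x c : ℝ) (hx : x ≠ 0) (hxc : x + c ≠ 0)
    (htR : ((b+2:ℕ):ℝ) ≠ 0)
    (hcval : c * ((a+2:ℕ) + ((b+2:ℕ):ℝ) - 1) = 1) :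
    (x * (x + c)) *
      ((1 + ((a+2:ℕ) * (-(c * x⁻¹)) + (b+2:ℕ) * (-(c * (x+c)⁻¹)))) * (1 + ((a+2:ℕ) * (c * x⁻¹) + (b+2:ℕ) * 0))
        - ((a+2:ℕ) * (-(c * x⁻¹)) + (b+2:ℕ) * 0) * ((a+2:ℕ) * (c * x⁻¹) + (b+2:ℕ) * (-((((b+2:ℕ):ℝ)⁻¹ - c) * (x+c)⁻¹))))
      = (x - 1) * (x + (a+2:ℕ) * c) := by
  have hT : ((b+2:ℕ):ℝ) * ((((b+2:ℕ):ℝ))⁻¹ - c) = 1 - ((b+2:ℕ):ℝ) * c := by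
    rw [mul_sub, mul_inv_cancel₀ htR]
  set S : ℝ := ((a+2:ℕ):ℝ)
  set T : ℝ := ((b+2:ℕ):ℝ)
  have hE : (1 + (S * (-(c * x⁻¹)) + T * (-(c * (x+c)⁻¹)))) * (1 + (S * (c * x⁻¹) + T * 0))
        - (S * (-(c * x⁻¹)) + T * 0) * (S * (c * x⁻¹) + T * (-((T⁻¹ - c) * (x+c)⁻¹)))
      = 1 - T * c * (x+c)⁻¹ - S * c * x⁻¹ * (x+c)⁻¹ := by
    have h1 : x * x⁻¹ = 1 := mul_inv_cancel₀ hx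
    have h2 : (x+c) * (x+c)⁻¹ = 1 := mul_inv_cancel₀ hxc
    have h3 : T * T⁻¹ = 1 := mul_inv_cancel₀ htR
    field_simp
    linear_combination (x * (x+c) * (x+c)) * hT - (x*c^2 + x^2*c*2 + x^3) * h3
  rw [hE]
  have h1 : x * x⁻¹ = 1 := mul_inv_cancel₀ hx
  have h2 : (x+c) * (x+c)⁻¹ = 1 := mul_inv_cancel₀ hxc
  have expand : (x * (x + c)) * (1 - T * c * (x+c)⁻¹ - S * c * x⁻¹ * (x+c)⁻¹)
      = x * (x+c) - T*c*x - S*c := by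
    field_simp
  rw [expand]
  linear_combination (-x) * hcval

lemma det_eval (s t : ℕ) (hs : 2 ≤ s) (ht : 2 ≤ t) (x : ℝ) (hx : x ≠ 0)
    (hxc : x + ((s:ℝ)+t-1)⁻¹ ≠ 0) :
    (x • (1 : Matrix (Fin (s+t)) (Fin (s+t)) ℝ) - Mmat s t).det
      = x^(s-1) * (x + ((s:ℝ)+t-1)⁻¹)^(t-1) * (x - 1) * (x + s * ((s:ℝ)+t-1)⁻¹) := by
  set c : ℝ := ((s:ℝ)+t-1)⁻¹ with hc
  have hC : (s:ℝ)+t-1 ≠ 0 := by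
    have : (3:ℝ) ≤ (s:ℝ)+t := by push_cast; exact_mod_cast (by omega : (3:ℕ) ≤ s+t)
    nlinarith
  have htR : (t:ℝ) ≠ 0 := by positivity
  set d : Fin (s+t) → ℝ := fun i => if (i:ℕ) < s then x else x + c with hd
  set e : Fin (s+t) → ℝ := fun i => if (i:ℕ) < s then x⁻¹ else (x+c)⁻¹ with he
  -- step 1
  have step1 : x • (1 : Matrix (Fin (s+t)) (Fin (s+t)) ℝ) - Mmat s t
      = Matrix.diagonal d - Umat s t * Vmat s t c := by
    ext i j
    simp only [Matrix.sub_apply, Matrix.smul_apply, Matrix.one_apply,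
      Matrix.diagonal_apply, Matrix.mul_apply, Fin.sum_univ_two, Umat, Vmat, Mmat,
      Matrix.of_apply, hd]
    by_cases hij : i = j
    · subst hij
      by_cases his : (i:ℕ) < s <;> simp [his] <;> ring
    · have hij' : j ≠ i := fun h => hij h.symm
      by_cases his : (i:ℕ) < s <;> by_cases hjs : (j:ℕ) < s <;>
        simp [hij, hij', his, hjs] <;> ring
  -- step 2 : inverse of diagonal
  have hxc' : x + c ≠ 0 := hxc
  have step2 : Matrix.diagonal d * Matrix.diagonal e = 1 := by
    rw [Matrix.diagonal_mul_diagonal]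
    have hde : (d * e) = fun _ => (1:ℝ) := by
      funext i
      simp only [Pi.mul_apply, hd, he]
      by_cases his : (i:ℕ) < s <;> simp [his] <;> field_simp
    rw [show (fun i => d i * e i) = fun _ => (1:ℝ) from funext fun i => congrFun hde i,
      Matrix.diagonal_one]
  -- step 3 : factorization
  have step3 : Matrix.diagonal d - Umat s t * Vmat s t c
      = Matrix.diagonal d * (1 + (-(Matrix.diagonal e * Umat s t)) * Vmat s t c) := by
    rw [Matrix.mul_add, Matrix.mul_one, Matrix.neg_mul, Matrix.mul_neg,
      ← Matrix.mul_assoc, ← Matrix.mul_assoc, step2, Matrix.one_mul]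
    rw [sub_eq_add_neg]
  have hdetD : (Matrix.diagonal d).det = x^s * (x+c)^t := by
    rw [Matrix.det_diagonal]
    exact prod_ite_fin s t x (x+c)
  -- entries of the 2x2 matrix
  have hmul : ∀ (k : Fin 2) (l : Fin 2), (Vmat s t c * (-(Matrix.diagonal e * Umat s t))) k l
      = ∑ j : Fin (s+t), Vmat s t c k j * (-(e j * Umat s t j l)) := by
    intro k l
    rw [Matrix.mul_apply]
    congr 1; funext j
    rw [Matrix.neg_apply, Matrix.diagonal_mul]
  have h00 : (Vmat s t c * (-(Matrix.diagonal e * Umat s t))) 0 0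
      = s * (-(c * x⁻¹)) + t * (-(c * (x+c)⁻¹)) := by
    rw [hmul]
    rw [show (fun j : Fin (s+t) => Vmat s t c 0 j * (-(e j * Umat s t j 0)))
        = fun j : Fin (s+t) => (if (j:ℕ) < s then -(c * x⁻¹) else -(c * (x+c)⁻¹)) from
      funext fun j => by by_cases h : (j:ℕ) < s <;> simp [Vmat, Umat, he, h] <;> ring]
    exact sum_ite_fin s t _ _
  have h01 : (Vmat s t c * (-(Matrix.diagonal e * Umat s t))) 0 1
      = s * (-(c * x⁻¹)) + t * 0 := by
    rw [hmul]
    rw [show (fun j : Fin (s+t) => Vmat s t c 0 j * (-(e j * Umat s t j 1)))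
        = fun j : Fin (s+t) => (if (j:ℕ) < s then -(c * x⁻¹) else 0) from
      funext fun j => by by_cases h : (j:ℕ) < s <;> simp [Vmat, Umat, he, h] <;> ring]
    exact sum_ite_fin s t _ _
  have h10 : (Vmat s t c * (-(Matrix.diagonal e * Umat s t))) 1 0
      = s * (c * x⁻¹) + t * (-(((t:ℝ)⁻¹ - c) * (x+c)⁻¹)) := by
    rw [hmul]
    rw [show (fun j : Fin (s+t) => Vmat s t c 1 j * (-(e j * Umat s t j 0)))
        = fun j : Fin (s+t) => (if (j:ℕ) < s then c * x⁻¹ else -(((t:ℝ)⁻¹ - c) * (x+c)⁻¹)) from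
      funext fun j => by by_cases h : (j:ℕ) < s <;> simp [Vmat, Umat, he, h] <;> ring]
    exact sum_ite_fin s t _ _
  have h11 : (Vmat s t c * (-(Matrix.diagonal e * Umat s t))) 1 1
      = s * (c * x⁻¹) + t * 0 := by
    rw [hmul]
    rw [show (fun j : Fin (s+t) => Vmat s t c 1 j * (-(e j * Umat s t j 1)))
        = fun j : Fin (s+t) => (if (j:ℕ) < s then c * x⁻¹ else 0) from
      funext fun j => by by_cases h : (j:ℕ) < s <;> simp [Vmat, Umat, he, h] <;> ring]
    exact sum_ite_fin s t _ _
  have hdet2 : (1 + Vmat s t c * (-(Matrix.diagonal e * Umat s t))).det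
      = (1 + (s * (-(c * x⁻¹)) + t * (-(c * (x+c)⁻¹)))) * (1 + (s * (c * x⁻¹) + t * 0))
        - (s * (-(c * x⁻¹)) + t * 0) * (s * (c * x⁻¹) + t * (-(((t:ℝ)⁻¹ - c) * (x+c)⁻¹))) := by
    rw [Matrix.det_fin_two]
    simp only [Matrix.add_apply, Matrix.one_apply, h00, h01, h10, h11]
    norm_num
  have main : (x • (1 : Matrix (Fin (s+t)) (Fin (s+t)) ℝ) - Mmat s t).det
      = (x^s * (x+c)^t) *
        ((1 + (s * (-(c * x⁻¹)) + t * (-(c * (x+c)⁻¹)))) * (1 + (s * (c * x⁻¹) + t * 0))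
        - (s * (-(c * x⁻¹)) + t * 0) * (s * (c * x⁻¹) + t * (-(((t:ℝ)⁻¹ - c) * (x+c)⁻¹)))) := by
    rw [step1, step3, Matrix.det_mul, Matrix.det_one_add_mul_comm, hdetD, hdet2]
  rw [main]
  -- final algebra
  obtain ⟨a, rfl⟩ : ∃ a, s = a + 2 := ⟨s - 2, by omega⟩
  obtain ⟨b, rfl⟩ : ∃ b, t = b + 2 := ⟨t - 2, by omega⟩
  have hpow1 : x ^ (a + 2) = x ^ (a + 2 - 1) * x := by
    rw [show a + 2 - 1 = a + 1 from rfl, ← pow_succ]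
  have hpow2 : (x + c) ^ (b + 2) = (x + c) ^ (b + 2 - 1) * (x + c) := by
    rw [show b + 2 - 1 = b + 1 from rfl, ← pow_succ]
  rw [hpow1, hpow2]
  have key : (x * (x + c)) *
      ((1 + ((a+2:ℕ) * (-(c * x⁻¹)) + (b+2:ℕ) * (-(c * (x+c)⁻¹)))) * (1 + ((a+2:ℕ) * (c * x⁻¹) + (b+2:ℕ) * 0))
        - ((a+2:ℕ) * (-(c * x⁻¹)) + (b+2:ℕ) * 0) * ((a+2:ℕ) * (c * x⁻¹) + (b+2:ℕ) * (-((((b+2:ℕ):ℝ)⁻¹ - c) * (x+c)⁻¹))))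
      = (x - 1) * (x + (a+2:ℕ) * c) := by
    refine key_alg a b x c hx hxc' htR ?_
    rw [hc]
    exact inv_mul_cancel₀ hC
  set E := ((1 + ((a+2:ℕ) * (-(c * x⁻¹)) + (b+2:ℕ) * (-(c * (x+c)⁻¹)))) * (1 + ((a+2:ℕ) * (c * x⁻¹) + (b+2:ℕ) * 0))
        - ((a+2:ℕ) * (-(c * x⁻¹)) + (b+2:ℕ) * 0) * ((a+2:ℕ) * (c * x⁻¹) + (b+2:ℕ) * (-((((b+2:ℕ):ℝ)⁻¹ - c) * (x+c)⁻¹)))) with hE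
  have hxE : x * (x + c) * E = (x - 1) * (x + (a+2:ℕ) * c) := by rw [hE]; exact key
  rw [show x ^ (a + 2 - 1) * x * ((x + c) ^ (b + 2 - 1) * (x + c)) * E
      = x ^ (a + 2 - 1) * (x + c) ^ (b + 2 - 1) * (x * (x + c) * E) from by ring, hxE]
  ring

/-- For the connected threshold graph with string `0^s 1^t`
(`s, t ≥ 2`), i.e. the complete split graph on `n = s + t` vertices, the
eigenvalues of the normalized adjacency matrix are exactly `1`, `0` with
multiplicity `s-1`, `-1/(n-1)` with multiplicity `t-1`, and `-(n-t)/(n-1)`. -/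
theorem complete_split_spectrum (s t : ℕ) (hs : 2 ≤ s) (ht : 2 ≤ t) :
    let n := s + t
    let G := thresholdGraph n (fun p => decide (s ≤ p.val))
    (NA G).charpoly.roots =
      {(1 : ℝ)} + Multiset.replicate (s - 1) (0 : ℝ) +
        Multiset.replicate (t - 1) (-1 / ((n : ℝ) - 1)) +
        {-(((n : ℝ) - t) / ((n : ℝ) - 1))} := by
  show (NA (thresholdGraph (s+t) (fun p => decide (s ≤ p.val)))).charpoly.roots =
      {(1 : ℝ)} + Multiset.replicate (s - 1) (0 : ℝ) +
        Multiset.replicate (t - 1) (-1 / ((((s+t) : ℕ) : ℝ) - 1)) +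
        {-(((((s+t) : ℕ) : ℝ) - t) / ((((s+t) : ℕ) : ℝ) - 1))}
  set c : ℝ := ((s:ℝ)+t-1)⁻¹ with hc
  have hC : (s:ℝ)+t-1 ≠ 0 := by
    have : (3:ℝ) ≤ (s:ℝ)+t := by exact_mod_cast (by omega : (3:ℕ) ≤ s+t)
    nlinarith
  have hcast : ((((s+t):ℕ)):ℝ) - 1 = (s:ℝ)+t-1 := by push_cast; ring
  have e1 : (-1 : ℝ)/((((s+t):ℕ):ℝ) - 1) = -c := by
    rw [hcast, hc, neg_div, one_div]
  have e2 : -(((((s+t):ℕ):ℝ) - t)/((((s+t):ℕ):ℝ)-1)) = -((s:ℝ)*c) := by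
    rw [hcast, hc]
    push_cast
    rw [show (s:ℝ) + t - t = (s:ℝ) from by ring, div_eq_mul_inv]
  rw [e1, e2]
  have hchar : (NA (thresholdGraph (s+t) (fun p => decide (s ≤ p.val)))).charpoly
      = (X - C 1) * X^(s-1) * (X - C (-c))^(t-1) * (X - C (-((s:ℝ)*c))) := by
    apply Polynomial.eq_of_infinite_eval_eq
    have hsub : {x : ℝ | x ≠ 0 ∧ x + c ≠ 0} ⊆
        {x : ℝ | eval x (NA (thresholdGraph (s+t) (fun p => decide (s ≤ p.val)))).charpoly
          = eval x ((X - C 1) * X^(s-1) * (X - C (-c))^(t-1) * (X - C (-((s:ℝ)*c))))} := by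
      rintro x ⟨hx, hxc⟩
      show _ = _
      rw [evalCharpoly, NA_eq s t hs ht, det_eval s t hs ht x hx hxc]
      simp only [eval_mul, eval_pow, eval_sub, eval_X, eval_C]
      ring
    have hinf : ({x : ℝ | x ≠ 0 ∧ x + c ≠ 0}).Infinite := by
      have heq : {x : ℝ | x ≠ 0 ∧ x + c ≠ 0} = ({0, -c} : Set ℝ)ᶜ := by
        ext x
        simp only [Set.mem_setOf_eq, Set.mem_compl_iff, Set.mem_insert_iff,
          Set.mem_singleton_iff, not_or]
        constructor
        · rintro ⟨h1, h2⟩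
          exact ⟨h1, fun he => h2 (by rw [he]; ring)⟩
        · rintro ⟨h1, h2⟩
          refine ⟨h1, fun he => h2 ?_⟩
          linarith
      rw [heq]
      exact Set.Finite.infinite_compl (Set.Finite.insert 0 (Set.finite_singleton (-c)))
    exact hinf.mono hsub
  rw [hchar]
  have n1 : (X - C (1:ℝ)) ≠ 0 := X_sub_C_ne_zero 1
  have n2 : ((X : ℝ[X]))^(s-1) ≠ 0 := pow_ne_zero _ X_ne_zero
  have n3 : ((X : ℝ[X]) - C (-c))^(t-1) ≠ 0 := pow_ne_zero _ (X_sub_C_ne_zero _)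
  have n4 : (X : ℝ[X]) - C (-((s:ℝ)*c)) ≠ 0 := X_sub_C_ne_zero _
  rw [Polynomial.roots_mul (mul_ne_zero (mul_ne_zero (mul_ne_zero n1 n2) n3) n4),
    Polynomial.roots_mul (mul_ne_zero (mul_ne_zero n1 n2) n3),
    Polynomial.roots_mul (mul_ne_zero n1 n2),
    Polynomial.roots_X_sub_C, Polynomial.roots_pow, Polynomial.roots_pow,
    Polynomial.roots_X, Polynomial.roots_X_sub_C, Polynomial.roots_X_sub_C]
  simp [Multiset.nsmul_singleton]
end
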